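/- Let G = (U, W; E) be a finite bipartite graph possibly with parallel edges, with preference functions p_v for every vertex v, a set C ⊆ U ∪ W of critical vertices, a set E_c ⊆ E of critical edges such that every critical edge is incident to at least one critical vertex, and reals 0 < γ_e^v < δ_e^v for every edge e and endpoint v of e. Then there exists a matching M in G such that (i) M is critical, (ii) no edge cγ-blocks M (so M is cγ-stable), and (iii) every cγ-stable matching N of the instance satisfies 2|N| ≤ 3|M|. -/

import Mathlib

open scoped Classical

/-- `M` is a matching: every vertex is incident to at most one edge of `M`. -/
def IsMatching {U W E : Type*} (eu : E → U) (ew : E → W) (M : Finset E) : Prop :=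
  ∀ e ∈ M, ∀ f ∈ M, e ≠ f → eu e ≠ eu f ∧ ew e ≠ ew f

/-- The preference value `p_u(M(u))` of the `M`-partner of `u ∈ U` (with `p_u(∅) = 0`). -/
noncomputable def valU {U E : Type*} (eu : E → U) (pU : E → ℝ) (M : Finset E)
    (u : U) : ℝ :=
  ∑ f ∈ M.filter (fun f => eu f = u), pU f

/-- The preference value `p_w(M(w))` of the `M`-partner of `w ∈ W` (with `p_w(∅) = 0`). -/
noncomputable def valW {W E : Type*} (ew : E → W) (pW : E → ℝ) (M : Finset E)
    (w : W) : ℝ :=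
  ∑ f ∈ M.filter (fun f => ew f = w), pW f

/-- The number of critical vertices (elements of `C ⊆ U ⊕ W`) covered by the critical
edges `M_c = M ∩ E_c` of `M`. -/
noncomputable def critCoveredC {U W E : Type*} [DecidableEq E] (eu : E → U) (ew : E → W)
    (C : Finset (U ⊕ W)) (Ec : Finset E) (M : Finset E) : ℕ :=
  (C.filter (fun v =>
    Sum.elim (fun u => ∃ e ∈ M ∩ Ec, eu e = u) (fun w => ∃ e ∈ M ∩ Ec, ew e = w) v)).card

/-- `M` is critical: there is no matching `N` such that `N_c` covers strictly more
critical vertices than `M_c`. -/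
def IsCritical {U W E : Type*} [DecidableEq E] (eu : E → U) (ew : E → W)
    (C : Finset (U ⊕ W)) (Ec : Finset E) (M : Finset E) : Prop :=
  ∀ N : Finset E, IsMatching eu ew N →
    critCoveredC eu ew C Ec N ≤ critCoveredC eu ew C Ec M

/-- `M \ {M(u), M(w)} ∪ {e}` for `e = (u, w)`. -/
noncomputable def swapIn {U W E : Type*} [DecidableEq E] (eu : E → U) (ew : E → W)
    (M : Finset E) (e : E) : Finset E :=
  insert e (M.filter (fun f => eu f ≠ eu e ∧ ew f ≠ ew e))

/-- The edge `e = (u, w) ∉ M` cγ-blocks the matching `M`. -/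
noncomputable def CGBlocks {U W E : Type*} [DecidableEq E] (eu : E → U) (ew : E → W)
    (pU pW γU δU γW δW : E → ℝ) (C : Finset (U ⊕ W)) (Ec : Finset E)
    (M : Finset E) (e : E) : Prop :=
  e ∉ M ∧ IsCritical eu ew C Ec (swapIn eu ew M e) ∧
    ((pU e - valU eu pU M (eu e) ≥ γU e ∧ pW e - valW ew pW M (ew e) ≥ δW e) ∨
     (pU e - valU eu pU M (eu e) ≥ δU e ∧ pW e - valW ew pW M (ew e) ≥ γW e))

set_option linter.unusedSectionVars false

namespace CGproof

variable {U W E : Type*} [Fintype U] [Fintype W] [Fintype E] [DecidableEq E]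

section Basics

variable (eu : E → U) (ew : E → W)

lemma eq_of_eu {M : Finset E} (hM : IsMatching eu ew M) {e f : E}
    (he : e ∈ M) (hf : f ∈ M) (h : eu e = eu f) : e = f := by
  by_contra hne; exact (hM e he f hf hne).1 h

lemma eq_of_ew {M : Finset E} (hM : IsMatching eu ew M) {e f : E}
    (he : e ∈ M) (hf : f ∈ M) (h : ew e = ew f) : e = f := by
  by_contra hne; exact (hM e he f hf hne).2 h

def CovU (M : Finset E) (u : U) : Prop := ∃ e ∈ M, eu e = u
def CovW (M : Finset E) (w : W) : Prop := ∃ e ∈ M, ew e = w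
def CovV (M : Finset E) : U ⊕ W → Prop := Sum.elim (CovU eu M) (CovW ew M)

lemma swap_matching {M : Finset E} (hM : IsMatching eu ew M) (e : E) :
    IsMatching eu ew (swapIn eu ew M e) := by
  intro x hx y hy hxy
  rcases Finset.mem_insert.1 hx with rfl | hx
  · rcases Finset.mem_insert.1 hy with rfl | hy
    · exact absurd rfl hxy
    · rcases Finset.mem_filter.1 hy with ⟨_, h1, h2⟩
      exact ⟨fun h => h1 h.symm, fun h => h2 h.symm⟩
  · rcases Finset.mem_insert.1 hy with rfl | hy
    · rcases Finset.mem_filter.1 hx with ⟨_, h1, h2⟩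
      exact ⟨h1, h2⟩
    · exact hM x (Finset.mem_filter.1 hx).1 y (Finset.mem_filter.1 hy).1 hxy

end Basics

section Mu

variable (eu : E → U) (ew : E → W) (C : Finset (U ⊕ W)) (Ec : Finset E)

noncomputable def mu (e : E) : ℕ :=
  if e ∈ Ec then
    ((if Sum.inl (eu e) ∈ C then 1 else 0) + (if Sum.inr (ew e) ∈ C then 1 else 0))
  else 0

noncomputable def pairC (e : E) : Finset (U ⊕ W) :=
  C.filter (fun v => v = Sum.inl (eu e) ∨ v = Sum.inr (ew e))

lemma pairC_card (e : E) : (pairC eu ew C e).card =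
    (if Sum.inl (eu e) ∈ C then 1 else 0) + (if Sum.inr (ew e) ∈ C then 1 else 0) := by
  classical
  rw [pairC, Finset.filter_or, Finset.filter_eq', Finset.filter_eq']
  by_cases h1 : Sum.inl (eu e) ∈ C <;> by_cases h2 : Sum.inr (ew e) ∈ C <;>
    simp [h1, h2, Finset.card_union_of_disjoint]

lemma critCov_eq_sum {M : Finset E} (hM : IsMatching eu ew M) :
    critCoveredC eu ew C Ec M = ∑ e ∈ M, mu eu ew C Ec e := by
  classical
  have hdisj : ∀ x ∈ M ∩ Ec, ∀ y ∈ M ∩ Ec, x ≠ y →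
      Disjoint (pairC eu ew C x) (pairC eu ew C y) := by
    intro x hx y hy hxy
    rw [Finset.disjoint_left]
    intro v hvx hvy
    rcases (Finset.mem_filter.1 hvx).2 with h | h <;>
      rcases (Finset.mem_filter.1 hvy).2 with h' | h'
    · exact (hM x (Finset.mem_inter.1 hx).1 y (Finset.mem_inter.1 hy).1 hxy).1
        (Sum.inl.inj (h ▸ h'))
    · exact Sum.inl_ne_inr (h ▸ h')
    · exact Sum.inr_ne_inl (h ▸ h')
    · exact (hM x (Finset.mem_inter.1 hx).1 y (Finset.mem_inter.1 hy).1 hxy).2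
        (Sum.inr.inj (h ▸ h'))
  have hset : C.filter (fun v =>
      Sum.elim (fun u => ∃ e ∈ M ∩ Ec, eu e = u) (fun w => ∃ e ∈ M ∩ Ec, ew e = w) v)
      = (M ∩ Ec).biUnion (pairC eu ew C) := by
    ext v
    simp only [Finset.mem_filter, Finset.mem_biUnion, pairC]
    constructor
    · rintro ⟨hvC, hcov⟩
      rcases v with u | w
      · rcases hcov with ⟨e, he, rfl⟩; exact ⟨e, he, hvC, Or.inl rfl⟩
      · rcases hcov with ⟨e, he, rfl⟩; exact ⟨e, he, hvC, Or.inr rfl⟩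
    · rintro ⟨e, he, hvC, h | h⟩
      · subst h; exact ⟨hvC, ⟨e, he, rfl⟩⟩
      · subst h; exact ⟨hvC, ⟨e, he, rfl⟩⟩
  rw [critCoveredC, hset, Finset.card_biUnion hdisj]
  have : ∀ e ∈ M ∩ Ec, (pairC eu ew C e).card = mu eu ew C Ec e := by
    intro e he
    rw [pairC_card, mu, if_pos (Finset.mem_inter.1 he).2]
  rw [Finset.sum_congr rfl this]
  apply Finset.sum_subset Finset.inter_subset_left
  intro e heM he
  have : e ∉ Ec := fun h => he (Finset.mem_inter.2 ⟨heM, h⟩)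
  simp [mu, this]

lemma swap_sum (M : Finset E) (e : E) (he : e ∉ M) :
    ∑ f ∈ swapIn eu ew M e, mu eu ew C Ec f
      + ∑ f ∈ M.filter (fun f => ¬(eu f ≠ eu e ∧ ew f ≠ ew e)), mu eu ew C Ec f
    = mu eu ew C Ec e + ∑ f ∈ M, mu eu ew C Ec f := by
  classical
  rw [swapIn, Finset.sum_insert (fun h => he (Finset.mem_filter.1 h).1)]
  rw [add_assoc, Finset.sum_filter_add_sum_filter_not]

end Mu

end CGproof

namespace CGproof

variable {U W E : Type*} [Fintype U] [Fintype W] [Fintype E] [DecidableEq E]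


lemma insert_matching {M : Finset E} (eu : E → U) (ew : E → W)
    (hM : IsMatching eu ew M) {e₁ : E}
    (hU : ∀ f ∈ M, eu f ≠ eu e₁) (hW : ∀ f ∈ M, ew f ≠ ew e₁) :
    IsMatching eu ew (insert e₁ M) := by
  intro x hx y hy hxy
  rcases Finset.mem_insert.1 hx with hx1 | hx2
  · rcases Finset.mem_insert.1 hy with hy1 | hy2
    · exact absurd (hx1.trans hy1.symm) hxy
    · subst hx1
      exact ⟨fun h => hU y hy2 h.symm, fun h => hW y hy2 h.symm⟩
  · rcases Finset.mem_insert.1 hy with hy1 | hy2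
    · subst hy1
      exact ⟨hU x hx2, hW x hx2⟩
    · exact hM x hx2 y hy2 hxy

section MD

variable (eu : E → U) (ew : E → W)

/-- Mendelsohn–Dulmage: combine a matching covering `A ⊆ U` with one covering `B ⊆ W`. -/
lemma MD_aux (F : Finset E) (MB : Finset E) (hMBm : IsMatching eu ew MB) (hMBF : MB ⊆ F)
    (A : Finset U) (B : Finset W) (hB : ∀ w ∈ B, CovW ew MB w) :
    ∀ (n : ℕ) (MA : Finset E), (MB \ MA).card ≤ n →
      IsMatching eu ew MA → MA ⊆ F → (∀ u ∈ A, CovU eu MA u) →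
      ∃ M3, IsMatching eu ew M3 ∧ M3 ⊆ F ∧ (∀ u ∈ A, CovU eu M3 u) ∧
        (∀ w ∈ B, CovW ew M3 w) := by
  intro n
  induction n with
  | zero =>
    intro MA hcard hMAm hMAF hA
    refine ⟨MA, hMAm, hMAF, hA, ?_⟩
    intro w hw
    rcases hB w hw with ⟨e, heMB, hew⟩
    have heMA : e ∈ MA := by
      by_contra h
      have : e ∈ MB \ MA := Finset.mem_sdiff.2 ⟨heMB, h⟩
      have := Finset.card_pos.2 ⟨e, this⟩
      omega
    exact ⟨e, heMA, hew⟩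
  | succ n ih =>
    intro MA hcard hMAm hMAF hA
    by_cases hdone : ∀ w ∈ B, CovW ew MA w
    · exact ⟨MA, hMAm, hMAF, hA, hdone⟩
    · push_neg at hdone
      obtain ⟨w, hwB, hwnc⟩ := hdone
      obtain ⟨e₁, he₁MB, he₁w⟩ := hB w hwB
      have he₁MA : e₁ ∉ MA := fun h => hwnc ⟨e₁, h, he₁w⟩
      by_cases hu : ∃ f ∈ MA, eu f = eu e₁
      · obtain ⟨f, hfMA, hfu⟩ := hu
        have hfe₁ : f ≠ e₁ := fun h => he₁MA (h ▸ hfMA)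
        have hfMB : f ∉ MB := by
          intro h
          exact hfe₁ (eq_of_eu eu ew hMBm h he₁MB hfu)
        have hmatch : IsMatching eu ew (insert e₁ (MA.erase f)) := by
          apply insert_matching eu ew
          · intro x hx y hy hxy
            exact hMAm x (Finset.mem_of_mem_erase hx) y (Finset.mem_of_mem_erase hy) hxy
          · intro g hg h
            have hgMA := Finset.mem_of_mem_erase hg
            have : g = f := eq_of_eu eu ew hMAm hgMA hfMA (h.trans hfu.symm)
            exact (Finset.mem_erase.1 hg).1 this
          · intro g hg h
            exact hwnc ⟨g, Finset.mem_of_mem_erase hg, h.trans he₁w⟩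
        have hsub : MB \ (insert e₁ (MA.erase f)) ⊆ (MB \ MA).erase e₁ := by
          intro g hg
          rcases Finset.mem_sdiff.1 hg with ⟨hgMB, hgMA'⟩
          have hge₁ : g ≠ e₁ := fun h => hgMA' (h ▸ Finset.mem_insert_self _ _)
          refine Finset.mem_erase.2 ⟨hge₁, Finset.mem_sdiff.2 ⟨hgMB, fun hgMA => ?_⟩⟩
          have hgf : g ≠ f := fun h => hfMB (h ▸ hgMB)
          exact hgMA' (Finset.mem_insert.2 (Or.inr (Finset.mem_erase.2 ⟨hgf, hgMA⟩)))
        have hcard' : (MB \ (insert e₁ (MA.erase f))).card ≤ n := by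
          have h1 : e₁ ∈ MB \ MA := Finset.mem_sdiff.2 ⟨he₁MB, he₁MA⟩
          have := Finset.card_le_card hsub
          rw [Finset.card_erase_of_mem h1] at this
          omega
        refine ih (insert e₁ (MA.erase f)) hcard' hmatch ?_ ?_
        · intro g hg
          rcases Finset.mem_insert.1 hg with rfl | hg
          · exact hMBF he₁MB
          · exact hMAF (Finset.mem_of_mem_erase hg)
        · intro u hu
          rcases hA u hu with ⟨g, hgMA, hgu⟩
          by_cases hgf : g = f
          · exact ⟨e₁, Finset.mem_insert_self _ _, by rw [← hgu, hgf, hfu]⟩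
          · exact ⟨g, Finset.mem_insert.2 (Or.inr (Finset.mem_erase.2 ⟨hgf, hgMA⟩)), hgu⟩
      · push_neg at hu
        have hmatch : IsMatching eu ew (insert e₁ MA) := by
          apply insert_matching eu ew hMAm
          · intro g hg h
            exact hu g hg h
          · intro g hg h
            exact hwnc ⟨g, hg, h.trans he₁w⟩
        have hsub : MB \ (insert e₁ MA) ⊆ (MB \ MA).erase e₁ := by
          intro g hg
          rcases Finset.mem_sdiff.1 hg with ⟨hgMB, hgMA'⟩
          have hge₁ : g ≠ e₁ := fun h => hgMA' (h ▸ Finset.mem_insert_self _ _)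
          exact Finset.mem_erase.2 ⟨hge₁, Finset.mem_sdiff.2 ⟨hgMB,
            fun hgMA => hgMA' (Finset.mem_insert.2 (Or.inr hgMA))⟩⟩
        have hcard' : (MB \ (insert e₁ MA)).card ≤ n := by
          have h1 : e₁ ∈ MB \ MA := Finset.mem_sdiff.2 ⟨he₁MB, he₁MA⟩
          have := Finset.card_le_card hsub
          rw [Finset.card_erase_of_mem h1] at this
          omega
        refine ih (insert e₁ MA) hcard' hmatch ?_ ?_
        · intro g hg
          rcases Finset.mem_insert.1 hg with rfl | hg
          · exact hMBF he₁MB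
          · exact hMAF hg
        · intro u hu
          rcases hA u hu with ⟨g, hgMA, hgu⟩
          exact ⟨g, Finset.mem_insert.2 (Or.inr hgMA), hgu⟩

lemma MD (F : Finset E) (MA MB : Finset E)
    (hMAm : IsMatching eu ew MA) (hMBm : IsMatching eu ew MB)
    (hMAF : MA ⊆ F) (hMBF : MB ⊆ F) (A : Finset U) (B : Finset W)
    (hA : ∀ u ∈ A, CovU eu MA u) (hB : ∀ w ∈ B, CovW ew MB w) :
    ∃ M3, IsMatching eu ew M3 ∧ M3 ⊆ F ∧ (∀ u ∈ A, CovU eu M3 u) ∧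
      (∀ w ∈ B, CovW ew M3 w) :=
  MD_aux eu ew F MB hMBm hMBF A B hB (MB \ MA).card MA le_rfl hMAm hMAF hA

end MD

end CGproof

namespace CGproof

variable {U W E : Type*} [Fintype U] [Fintype W] [Fintype E] [DecidableEq E]

section Dual

variable (eu : E → U) (ew : E → W) (C : Finset (U ⊕ W)) (Ec : Finset E)

lemma sum_ite_card (s : Finset U) : (∑ u : U, (if u ∈ s then (1:ℕ) else 0)) = s.card := by
  classical
  rw [Finset.sum_ite_mem, Finset.univ_inter, Finset.card_eq_sum_ones]

lemma leftDual : ∃ (yU : U ⊕ W → ℕ) (MA : Finset E) (A' : Finset U),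
    (∀ e ∈ Ec, Sum.inl (eu e) ∈ C → 1 ≤ yU (Sum.inl (eu e)) + yU (Sum.inr (ew e))) ∧
    (∑ v, yU v) ≤ A'.card ∧ IsMatching eu ew MA ∧ MA ⊆ Ec ∧
    (∀ u ∈ A', Sum.inl u ∈ C) ∧ (∀ u ∈ A', CovU eu MA u) := by
  classical
  set A : Finset U := Finset.univ.filter (fun u => Sum.inl u ∈ C) with hA
  set nb : Finset U → Finset W := fun S => (Ec.filter (fun e => eu e ∈ S)).image ew with hnb
  have hnbmem : ∀ (S : Finset U) (w : W), w ∈ nb S ↔ ∃ e ∈ Ec, eu e ∈ S ∧ ew e = w := by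
    intro S w
    simp only [hnb, Finset.mem_image, Finset.mem_filter]
    constructor
    · rintro ⟨e, ⟨he, heS⟩, hew⟩; exact ⟨e, he, heS, hew⟩
    · rintro ⟨e, he, heS, hew⟩; exact ⟨e, ⟨he, heS⟩, hew⟩
  set d : ℕ := A.powerset.sup (fun S => S.card - (nb S).card) with hd
  have hdle : ∀ S ⊆ A, S.card ≤ (nb S).card + d := by
    intro S hS
    have h2 : S.card - (nb S).card ≤ d :=
      Finset.le_sup (f := fun S => S.card - (nb S).card) (Finset.mem_powerset.2 hS)
    omega
  -- pick S* with the exact deficiency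
  obtain ⟨Sstar, hSsub, hSeq⟩ : ∃ Sstar, Sstar ⊆ A ∧
      (A \ Sstar).card + (nb Sstar).card + d = A.card := by
    by_cases hd0 : d = 0
    · refine ⟨∅, Finset.empty_subset _, ?_⟩
      have : nb ∅ = ∅ := by
        ext w; simp [hnbmem]
      rw [this, hd0, Finset.sdiff_empty]
      simp
    · obtain ⟨Sstar, hmem, heq⟩ := Finset.exists_mem_eq_sup A.powerset
        ⟨∅, Finset.empty_mem_powerset _⟩ (fun S => S.card - (nb S).card)
      have hSsub := Finset.mem_powerset.1 hmem
      refine ⟨Sstar, hSsub, ?_⟩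
      have hlt : (nb Sstar).card < Sstar.card := by
        by_contra h
        push_neg at h
        rw [← hd] at heq
        omega
      have hcardle : Sstar.card ≤ A.card := Finset.card_le_card hSsub
      have hsd : (A \ Sstar).card = A.card - Sstar.card := Finset.card_sdiff_of_subset hSsub
      rw [← hd] at heq
      omega
  -- Hall's theorem with dummies
  set t : U → Finset ((W ⊕ Fin d) ⊕ U) := fun u =>
    if u ∈ A then
      ((nb {u}).image (fun w => Sum.inl (Sum.inl w)) ∪
        (Finset.univ.image (fun i : Fin d => Sum.inl (Sum.inr i))))
    else {Sum.inr u} with ht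
  have hall : ∀ s : Finset U, s.card ≤ (s.biUnion t).card := by
    intro s
    set s₁ := s.filter (fun u => u ∈ A) with hs₁
    set s₂ := s.filter (fun u => ¬ u ∈ A) with hs₂
    have hs : s₁.card + s₂.card = s.card :=
      Finset.card_filter_add_card_filter_not _
    have hinr : Function.Injective (Sum.inr : U → (W ⊕ Fin d) ⊕ U) :=
      fun a b h => by simpa using h
    have hinll : Function.Injective (fun w => Sum.inl (Sum.inl w) : W → (W ⊕ Fin d) ⊕ U) :=
      fun a b h => by simpa using h
    have hinlr : Function.Injective (fun i => Sum.inl (Sum.inr i) : Fin d → (W ⊕ Fin d) ⊕ U) :=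
      fun a b h => by simpa using h
    have hsub2 : s₂.image Sum.inr ⊆ s.biUnion t := by
      intro x hx
      obtain ⟨u, hu, rfl⟩ := Finset.mem_image.1 hx
      refine Finset.mem_biUnion.2 ⟨u, (Finset.mem_filter.1 hu).1, ?_⟩
      rw [ht]
      simp [(Finset.mem_filter.1 hu).2]
    by_cases h1 : s₁.Nonempty
    · obtain ⟨u₀, hu₀⟩ := h1
      set X1 : Finset ((W ⊕ Fin d) ⊕ U) := (nb s₁).image (fun w => Sum.inl (Sum.inl w)) with hX1
      set X2 : Finset ((W ⊕ Fin d) ⊕ U) := Finset.univ.image (fun i : Fin d => Sum.inl (Sum.inr i)) with hX2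
      set X3 : Finset ((W ⊕ Fin d) ⊕ U) := s₂.image Sum.inr with hX3
      have hsub1 : X1 ∪ X2 ∪ X3 ⊆ s.biUnion t := by
        apply Finset.union_subset
        apply Finset.union_subset
        · intro x hx
          obtain ⟨w, hw, rfl⟩ := Finset.mem_image.1 hx
          obtain ⟨e, he, heS, hew⟩ := (hnbmem s₁ w).1 hw
          have heA : eu e ∈ A := (Finset.mem_filter.1 heS).2
          refine Finset.mem_biUnion.2 ⟨eu e, (Finset.mem_filter.1 heS).1, ?_⟩
          rw [ht]
          simp only [if_pos heA, Finset.mem_union]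
          left
          exact Finset.mem_image.2 ⟨w, (hnbmem {eu e} w).2 ⟨e, he, Finset.mem_singleton_self _, hew⟩, rfl⟩
        · intro x hx
          obtain ⟨i, hi, rfl⟩ := Finset.mem_image.1 hx
          refine Finset.mem_biUnion.2 ⟨u₀, (Finset.mem_filter.1 hu₀).1, ?_⟩
          rw [ht]
          simp only [(Finset.mem_filter.1 hu₀).2, if_true]
          exact Finset.mem_union_right _ hx
        · exact hsub2
      have hd12 : Disjoint X1 X2 := by
        rw [Finset.disjoint_left]
        rintro x hx hy
        obtain ⟨w, _, rfl⟩ := Finset.mem_image.1 hx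
        obtain ⟨i, _, h⟩ := Finset.mem_image.1 hy
        simp at h
      have hd123 : Disjoint (X1 ∪ X2) X3 := by
        rw [Finset.disjoint_left]
        rintro x hx hy
        obtain ⟨u, _, rfl⟩ := Finset.mem_image.1 hy
        rcases Finset.mem_union.1 hx with hx | hx
        · obtain ⟨w, _, h⟩ := Finset.mem_image.1 hx
          simp at h
        · obtain ⟨i, _, h⟩ := Finset.mem_image.1 hx
          simp at h
      have hcardX : (X1 ∪ X2 ∪ X3).card = (nb s₁).card + d + s₂.card := by
        rw [Finset.card_union_of_disjoint hd123, Finset.card_union_of_disjoint hd12,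
          hX1, hX2, hX3, Finset.card_image_of_injective _ hinll,
          Finset.card_image_of_injective _ hinlr,
          Finset.card_image_of_injective _ hinr]
        simp
      have hs₁le : s₁.card ≤ (nb s₁).card + d := by
        apply hdle
        intro u hu
        exact (Finset.mem_filter.1 hu).2
      have := Finset.card_le_card hsub1
      rw [hcardX] at this
      omega
    · have hs₁0 : s₁.card = 0 := by
        rw [Finset.card_eq_zero]
        exact Finset.not_nonempty_iff_eq_empty.1 h1
      have := Finset.card_le_card hsub2
      rw [Finset.card_image_of_injective _ hinr] at this
      omega
  obtain ⟨f, hfinj, hft⟩ := (Finset.all_card_le_biUnion_card_iff_exists_injective t).1 hall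
  set A' : Finset U := A.filter (fun u => ∃ w : W, f u = Sum.inl (Sum.inl w)) with hA'
  have hA'edge : ∀ u ∈ A', ∃ e ∈ Ec, eu e = u ∧ Sum.inl (Sum.inl (ew e)) = f u := by
    intro u hu
    obtain ⟨huA, w, hw⟩ := Finset.mem_filter.1 hu
    have := hft u
    rw [ht] at this
    simp only [huA, if_true] at this
    rcases Finset.mem_union.1 this with h | h
    · obtain ⟨w', hw', heq⟩ := Finset.mem_image.1 h
      obtain ⟨e, he, heu, hew⟩ := (hnbmem {u} w').1 hw'
      exact ⟨e, he, Finset.mem_singleton.1 heu, by rw [hew, heq]⟩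
    · obtain ⟨i, _, heq⟩ := Finset.mem_image.1 h
      rw [← heq] at hw
      simp at hw
  choose g hg1 hg2 hg3 using hA'edge
  set MA : Finset E := A'.attach.image (fun x => g x.1 x.2) with hMA
  have hMAm : IsMatching eu ew MA := by
    intro x hx y hy hxy
    obtain ⟨⟨u₁, hu₁⟩, _, rfl⟩ := Finset.mem_image.1 hx
    obtain ⟨⟨u₂, hu₂⟩, _, rfl⟩ := Finset.mem_image.1 hy
    have hne : u₁ ≠ u₂ := by
      rintro rfl
      exact hxy rfl
    constructor
    · rw [hg2 u₁ hu₁, hg2 u₂ hu₂]; exact hne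
    · intro h
      apply hne
      apply hfinj
      rw [← hg3 u₁ hu₁, ← hg3 u₂ hu₂, h]
  have hMAsub : MA ⊆ Ec := by
    intro x hx
    obtain ⟨⟨u₁, hu₁⟩, _, rfl⟩ := Finset.mem_image.1 hx
    exact hg1 u₁ hu₁
  have hMAcov : ∀ u ∈ A', CovU eu MA u := by
    intro u hu
    exact ⟨g u hu, Finset.mem_image.2 ⟨⟨u, hu⟩, Finset.mem_attach _ _, rfl⟩, hg2 u hu⟩
  -- card bound : A.card ≤ A'.card + d
  have hcardbound : A.card ≤ A'.card + d := by
    have hdum : ∀ u ∈ A \ A', ∃ i : Fin d, f u = Sum.inl (Sum.inr i) := by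
      intro u hu
      obtain ⟨huA, hunA'⟩ := Finset.mem_sdiff.1 hu
      have := hft u
      rw [ht] at this
      simp only [huA, if_true] at this
      rcases Finset.mem_union.1 this with h | h
      · obtain ⟨w', _, heq⟩ := Finset.mem_image.1 h
        exact absurd (Finset.mem_filter.2 ⟨huA, ⟨w', heq.symm⟩⟩) hunA'
      · obtain ⟨i, _, heq⟩ := Finset.mem_image.1 h
        exact ⟨i, heq.symm⟩
    by_cases hne : (A \ A').Nonempty
    · obtain ⟨u₀, hu₀⟩ := hne
      obtain ⟨i₀, _⟩ := hdum u₀ hu₀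
      choose df hdf using hdum
      set F : U → Fin d := fun u => if h : u ∈ A \ A' then df u h else i₀ with hF
      have hinj : Set.InjOn F ↑(A \ A') := by
        intro x hx y hy hxy
        have hx' : x ∈ A \ A' := by simpa using hx
        have hy' : y ∈ A \ A' := by simpa using hy
        rw [hF] at hxy
        simp only [dif_pos hx', dif_pos hy'] at hxy
        apply hfinj
        rw [hdf x hx', hdf y hy', hxy]
      have hAd : (A \ A').card ≤ d := by
        have h3 := Finset.card_le_card_of_injOn (t := (Finset.univ : Finset (Fin d))) F
          (fun a ha => Finset.mem_univ _) hinj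
        simpa using h3
      have h2 : A.card ≤ (A \ A').card + A'.card := by
        have h4 : A ⊆ (A \ A') ∪ A' := by
          rw [Finset.sdiff_union_self_eq_union]
          exact Finset.subset_union_left
        have h5 := Finset.card_le_card h4
        have h6 := Finset.card_union_le (A \ A') A'
        omega
      omega
    · have : A ⊆ A' := by
        intro u hu
        by_contra h
        exact hne ⟨u, Finset.mem_sdiff.2 ⟨hu, h⟩⟩
      have := Finset.card_le_card this
      omega
  -- the dual function
  set yU : U ⊕ W → ℕ := Sum.elim (fun u => if u ∈ A \ Sstar then 1 else 0)
    (fun w => if w ∈ nb Sstar then 1 else 0) with hyU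
  refine ⟨yU, MA, A', ?_, ?_, hMAm, hMAsub, ?_, hMAcov⟩
  · intro e he hC
    have heA : eu e ∈ A := Finset.mem_filter.2 ⟨Finset.mem_univ _, hC⟩
    rw [hyU]
    simp only [Sum.elim_inl, Sum.elim_inr]
    by_cases hS : eu e ∈ Sstar
    · have h2 : ew e ∈ nb Sstar := (hnbmem Sstar (ew e)).2 ⟨e, he, hS, rfl⟩
      rw [if_pos h2]
      omega
    · rw [if_pos (Finset.mem_sdiff.2 ⟨heA, hS⟩)]
      omega
  · have hsum : (∑ v, yU v) = (A \ Sstar).card + (nb Sstar).card := by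
      rw [hyU, Fintype.sum_sum_type]
      simp only [Sum.elim_inl, Sum.elim_inr]
      rw [sum_ite_card, sum_ite_card]
    omega
  · intro u hu
    exact (Finset.mem_filter.1 ((Finset.mem_filter.1 hu).1)).2

end Dual

end CGproof

namespace CGproof

variable {U W E : Type*} [Fintype U] [Fintype W] [Fintype E] [DecidableEq E]

section Dual2

variable (eu : E → U) (ew : E → W) (C : Finset (U ⊕ W)) (Ec : Finset E)

lemma matching_flip {M : Finset E} (h : IsMatching ew eu M) : IsMatching eu ew M := by
  intro e he f hf hef
  exact ⟨(h e he f hf hef).2, (h e he f hf hef).1⟩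

lemma rightDual : ∃ (yW : U ⊕ W → ℕ) (MB : Finset E) (B' : Finset W),
    (∀ e ∈ Ec, Sum.inr (ew e) ∈ C → 1 ≤ yW (Sum.inl (eu e)) + yW (Sum.inr (ew e))) ∧
    (∑ v, yW v) ≤ B'.card ∧ IsMatching eu ew MB ∧ MB ⊆ Ec ∧
    (∀ w ∈ B', Sum.inr w ∈ C) ∧ (∀ w ∈ B', CovW ew MB w) := by
  classical
  obtain ⟨yU, MB, B', hfeas, hsum, hm, hsub, hcrit, hcov⟩ :=
    leftDual ew eu (C.image (Sum.swap)) Ec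
  have hswap : ∀ w : W, (Sum.inl w ∈ C.image (Sum.swap) ↔ Sum.inr w ∈ C) := by
    intro w
    constructor
    · intro h
      obtain ⟨v, hv, hveq⟩ := Finset.mem_image.1 h
      have : v = Sum.inr w := by
        rcases v with u' | w'
        · simp at hveq
        · simp at hveq
          subst hveq; rfl
      exact this ▸ hv
    · intro h
      exact Finset.mem_image.2 ⟨Sum.inr w, h, rfl⟩
  refine ⟨fun v => yU (Sum.swap v), MB, B', ?_, ?_, matching_flip eu ew hm, hsub, ?_, hcov⟩
  · intro e he hC
    have := hfeas e he ((hswap (ew e)).2 hC)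
    simpa [add_comm] using this
  · calc (∑ v : U ⊕ W, yU (Sum.swap v)) = ∑ v : W ⊕ U, yU v := by
          exact Fintype.sum_equiv (Equiv.sumComm U W) _ _ (fun v => rfl)
       _ ≤ B'.card := hsum
  · intro w hw
    exact (hswap w).1 (hcrit w hw)

end Dual2

end CGproof

namespace CGproof

variable {U W E : Type*} [Fintype U] [Fintype W] [Fintype E] [DecidableEq E]

section Pack

variable (eu : E → U) (ew : E → W) (C : Finset (U ⊕ W)) (Ec : Finset E)

noncomputable def covS (M : Finset E) : Finset (U ⊕ W) :=
  M.biUnion (fun e => {Sum.inl (eu e), Sum.inr (ew e)})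

lemma mem_covS_iff (M : Finset E) (v : U ⊕ W) :
    v ∈ covS eu ew M ↔ CovV eu ew M v := by
  classical
  simp only [covS, Finset.mem_biUnion, Finset.mem_insert, Finset.mem_singleton]
  rcases v with u | w
  · constructor
    · rintro ⟨e, he, h | h⟩
      · exact ⟨e, he, (Sum.inl.inj h).symm⟩
      · exact (Sum.inl_ne_inr h).elim
    · rintro ⟨e, he, rfl⟩
      exact ⟨e, he, Or.inl rfl⟩
  · constructor
    · rintro ⟨e, he, h | h⟩
      · exact (Sum.inr_ne_inl h).elim
      · exact ⟨e, he, (Sum.inr.inj h).symm⟩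
    · rintro ⟨e, he, rfl⟩
      exact ⟨e, he, Or.inr rfl⟩

lemma pair_sum_eq (y : U ⊕ W → ℕ) {M : Finset E} (hM : IsMatching eu ew M) :
    ∑ e ∈ M, (y (Sum.inl (eu e)) + y (Sum.inr (ew e))) = ∑ v ∈ covS eu ew M, y v := by
  classical
  rw [covS, Finset.sum_biUnion]
  · apply Finset.sum_congr rfl
    intro e he
    rw [Finset.sum_pair (by simp : (Sum.inl (eu e) : U ⊕ W) ≠ Sum.inr (ew e))]
  · intro x hx y' hy' hxy
    simp only [Function.onFun]
    rw [Finset.disjoint_left]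
    intro v hvx hvy
    simp only [Finset.mem_coe, Finset.mem_insert, Finset.mem_singleton] at hvx hvy
    have hx' : x ∈ M := hx
    have hy'' : y' ∈ M := hy'
    rcases hvx with h1 | h1 <;> rcases hvy with h2 | h2
    · exact (hM x hx' y' hy'' hxy).1 (Sum.inl.inj (h1.symm.trans h2))
    · exact Sum.inl_ne_inr (h1.symm.trans h2)
    · exact Sum.inr_ne_inl (h1.symm.trans h2)
    · exact (hM x hx' y' hy'' hxy).2 (Sum.inr.inj (h1.symm.trans h2))

lemma weak_duality (y : U ⊕ W → ℕ)
    (hfeas : ∀ e, mu eu ew C Ec e ≤ y (Sum.inl (eu e)) + y (Sum.inr (ew e)))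
    {N : Finset E} (hN : IsMatching eu ew N) :
    ∑ e ∈ N, mu eu ew C Ec e ≤ ∑ v, y v := by
  classical
  calc ∑ e ∈ N, mu eu ew C Ec e
      ≤ ∑ e ∈ N, (y (Sum.inl (eu e)) + y (Sum.inr (ew e))) :=
        Finset.sum_le_sum (fun e _ => hfeas e)
    _ = ∑ v ∈ covS eu ew N, y v := pair_sum_eq eu ew y hN
    _ ≤ ∑ v, y v := Finset.sum_le_sum_of_subset (Finset.subset_univ _)

/-- The dual package: an optimal fractional-cover `y` and a maximum-weight matching
certifying optimality. -/
lemma exists_TP : ∃ (y : U ⊕ W → ℕ) (M0 : Finset E),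
    (∀ e, mu eu ew C Ec e ≤ y (Sum.inl (eu e)) + y (Sum.inr (ew e))) ∧
    IsMatching eu ew M0 ∧
    (∀ N, IsMatching eu ew N → ∑ e ∈ N, mu eu ew C Ec e ≤ ∑ e ∈ M0, mu eu ew C Ec e) ∧
    (∀ f ∈ M0, mu eu ew C Ec f = y (Sum.inl (eu f)) + y (Sum.inr (ew f))) ∧
    (∀ v, 0 < y v → CovV eu ew M0 v) := by
  classical
  obtain ⟨yU, MA, A', hfU, hsU, hmA, hsubA, hcritA, hcovA⟩ := leftDual eu ew C Ec
  obtain ⟨yW, MB, B', hfW, hsW, hmB, hsubB, hcritB, hcovB⟩ := rightDual eu ew C Ec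
  set y : U ⊕ W → ℕ := fun v => yU v + yW v with hy
  have hfeas : ∀ e, mu eu ew C Ec e ≤ y (Sum.inl (eu e)) + y (Sum.inr (ew e)) := by
    intro e
    rw [mu]
    by_cases he : e ∈ Ec
    · rw [if_pos he]
      have h1 : (if Sum.inl (eu e) ∈ C then 1 else 0) ≤ yU (Sum.inl (eu e)) + yU (Sum.inr (ew e)) := by
        by_cases h : Sum.inl (eu e) ∈ C
        · rw [if_pos h]; exact hfU e he h
        · rw [if_neg h]; omega
      have h2 : (if Sum.inr (ew e) ∈ C then 1 else 0) ≤ yW (Sum.inl (eu e)) + yW (Sum.inr (ew e)) := by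
        by_cases h : Sum.inr (ew e) ∈ C
        · rw [if_pos h]; exact hfW e he h
        · rw [if_neg h]; omega
      rw [hy]
      simp only
      omega
    · rw [if_neg he]; omega
  -- the combined matching M₃
  obtain ⟨M3, hm3, hsub3, hcov3A, hcov3B⟩ :=
    MD eu ew Ec MA MB hmA hmB hsubA hsubB A' B' hcovA hcovB
  -- M₃ has weight at least A'.card + B'.card
  have hM3w : A'.card + B'.card ≤ ∑ e ∈ M3, mu eu ew C Ec e := by
    rw [← critCov_eq_sum eu ew C Ec hm3]
    rw [critCoveredC]
    have hsubset : A'.image Sum.inl ∪ B'.image Sum.inr ⊆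
        C.filter (fun v => Sum.elim (fun u => ∃ e ∈ M3 ∩ Ec, eu e = u)
          (fun w => ∃ e ∈ M3 ∩ Ec, ew e = w) v) := by
      intro v hv
      rcases Finset.mem_union.1 hv with h | h
      · obtain ⟨u, hu, rfl⟩ := Finset.mem_image.1 h
        obtain ⟨e, he, heq⟩ := hcov3A u hu
        exact Finset.mem_filter.2 ⟨hcritA u hu,
          ⟨e, Finset.mem_inter.2 ⟨he, hsub3 he⟩, heq⟩⟩
      · obtain ⟨w, hw, rfl⟩ := Finset.mem_image.1 h
        obtain ⟨e, he, heq⟩ := hcov3B w hw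
        exact Finset.mem_filter.2 ⟨hcritB w hw,
          ⟨e, Finset.mem_inter.2 ⟨he, hsub3 he⟩, heq⟩⟩
    have hcard := Finset.card_le_card hsubset
    have hdisj : Disjoint (A'.image (Sum.inl : U → U ⊕ W)) (B'.image Sum.inr) := by
      rw [Finset.disjoint_left]
      rintro v hv hv'
      obtain ⟨u, _, rfl⟩ := Finset.mem_image.1 hv
      obtain ⟨w, _, h⟩ := Finset.mem_image.1 hv'
      exact Sum.inr_ne_inl h
    rw [Finset.card_union_of_disjoint hdisj,
      Finset.card_image_of_injective _ Sum.inl_injective,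
      Finset.card_image_of_injective _ Sum.inr_injective] at hcard
    exact hcard
  -- maximum-weight matching M0
  obtain ⟨M0, hM0mem, hM0max⟩ := Finset.exists_max_image
    ((Finset.univ : Finset (Finset E)).filter (fun M => IsMatching eu ew M))
    (fun M => ∑ e ∈ M, mu eu ew C Ec e)
    ⟨∅, Finset.mem_filter.2 ⟨Finset.mem_univ _, fun e he => absurd he (Finset.notMem_empty e)⟩⟩
  have hM0m : IsMatching eu ew M0 := (Finset.mem_filter.1 hM0mem).2
  have hM0max' : ∀ N, IsMatching eu ew N →
      ∑ e ∈ N, mu eu ew C Ec e ≤ ∑ e ∈ M0, mu eu ew C Ec e := by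
    intro N hN
    exact hM0max N (Finset.mem_filter.2 ⟨Finset.mem_univ _, hN⟩)
  -- the squeeze
  have hych : (∑ v, y v) = ∑ v, yU v + ∑ v, yW v := by
    rw [hy, Finset.sum_add_distrib]
  have h1 : (∑ v, y v) ≤ ∑ e ∈ M3, mu eu ew C Ec e := by
    rw [hych]; omega
  have h2 : ∑ e ∈ M3, mu eu ew C Ec e ≤ ∑ e ∈ M0, mu eu ew C Ec e := hM0max' M3 hm3
  have h3 : ∑ e ∈ M0, mu eu ew C Ec e ≤ ∑ e ∈ M0, (y (Sum.inl (eu e)) + y (Sum.inr (ew e))) :=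
    Finset.sum_le_sum (fun e _ => hfeas e)
  have h4 : ∑ e ∈ M0, (y (Sum.inl (eu e)) + y (Sum.inr (ew e))) = ∑ v ∈ covS eu ew M0, y v :=
    pair_sum_eq eu ew y hM0m
  have h5 : ∑ v ∈ covS eu ew M0, y v ≤ ∑ v, y v :=
    Finset.sum_le_sum_of_subset (Finset.subset_univ _)
  have hall_eq : ∑ e ∈ M0, mu eu ew C Ec e = ∑ e ∈ M0, (y (Sum.inl (eu e)) + y (Sum.inr (ew e)))
      ∧ ∑ v ∈ covS eu ew M0, y v = ∑ v, y v := by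
    constructor <;> omega
  refine ⟨y, M0, hfeas, hM0m, hM0max', ?_, ?_⟩
  · -- tightness
    by_contra hcon
    push_neg at hcon
    obtain ⟨f, hf, hne⟩ := hcon
    have hlt : mu eu ew C Ec f < y (Sum.inl (eu f)) + y (Sum.inr (ew f)) :=
      lt_of_le_of_ne (hfeas f) hne
    have hstrict : ∑ e ∈ M0, mu eu ew C Ec e
        < ∑ e ∈ M0, (y (Sum.inl (eu e)) + y (Sum.inr (ew e))) := by
      exact Finset.sum_lt_sum (fun e (_ : e ∈ M0) => hfeas e) ⟨f, hf, hlt⟩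
    omega
  · -- positives covered
    intro v hv
    rw [← mem_covS_iff]
    by_contra hvc
    have hsum := Finset.sum_sdiff (Finset.subset_univ (covS eu ew M0)) (f := y)
    have hzero : ∑ v ∈ Finset.univ \ covS eu ew M0, y v = 0 := by omega
    have := (Finset.sum_eq_zero_iff).1 hzero v (Finset.mem_sdiff.2 ⟨Finset.mem_univ _, hvc⟩)
    omega

end Pack

end CGproof

namespace CGproof

variable {U W E : Type*} [Fintype U] [Fintype W] [Fintype E] [DecidableEq E]

section Keys

variable (pU pW : E → ℝ)

noncomputable def rE : E → ℕ := fun e => ((Fintype.equivFin E) e : ℕ)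

lemma rE_inj : Function.Injective (rE (E := E)) := by
  intro a b h
  have := Fin.val_injective h
  exact (Fintype.equivFin E).injective this

noncomputable def keyU (e : E) : ℝ ×ₗ ℕ := toLex (pU e, rE e)
noncomputable def keyW (e : E) : ℝ ×ₗ ℕ := toLex (pW e, rE e)

lemma keyU_inj {e f : E} (h : keyU pU e = keyU pU f) : e = f := by
  have h2 : (pU e, rE e) = (pU f, rE f) := by
    have := congrArg (fun x => ofLex x) h
    simpa [keyU] using this
  exact rE_inj (congrArg Prod.snd h2)

lemma keyW_inj {e f : E} (h : keyW pW e = keyW pW f) : e = f := by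
  have h2 : (pW e, rE e) = (pW f, rE f) := by
    have := congrArg (fun x => ofLex x) h
    simpa [keyW] using this
  exact rE_inj (congrArg Prod.snd h2)

lemma keyU_lt_of_lt {e f : E} (h : pU e < pU f) : keyU pU e < keyU pU f := by
  rw [keyU, keyU, Prod.Lex.lt_iff]
  exact Or.inl h

lemma keyW_lt_of_lt {e f : E} (h : pW e < pW f) : keyW pW e < keyW pW f := by
  rw [keyW, keyW, Prod.Lex.lt_iff]
  exact Or.inl h

lemma keyU_lt_or {e f : E} (h : e ≠ f) : keyU pU e < keyU pU f ∨ keyU pU f < keyU pU e := by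
  rcases lt_trichotomy (keyU pU e) (keyU pU f) with h1 | h1 | h1
  · exact Or.inl h1
  · exact absurd (keyU_inj pU h1) h
  · exact Or.inr h1

lemma keyW_lt_or {e f : E} (h : e ≠ f) : keyW pW e < keyW pW f ∨ keyW pW f < keyW pW e := by
  rcases lt_trichotomy (keyW pW e) (keyW pW f) with h1 | h1 | h1
  · exact Or.inl h1
  · exact absurd (keyW_inj pW h1) h
  · exact Or.inr h1

end Keys

section Star

variable (eu : E → U) (ew : E → W) (pU pW : E → ℝ)

/-- A coverage-safe strictly blocking edge relative to the protected set `P`. -/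
def Block (P : Finset (U ⊕ W)) (M : Finset E) (e : E) : Prop :=
  (∀ f ∈ M, eu f = eu e → keyU pU f < keyU pU e) ∧
  (∀ f ∈ M, ew f = ew e → keyW pW f < keyW pW e) ∧
  (∀ v ∈ P, CovV eu ew M v → CovV eu ew (swapIn eu ew M e) v)

lemma covV_mono {M M' : Finset E} (h : M ⊆ M') {v : U ⊕ W} (hv : CovV eu ew M v) :
    CovV eu ew M' v := by
  rcases v with u | w
  · obtain ⟨e, he, heq⟩ := hv; exact ⟨e, h he, heq⟩
  · obtain ⟨e, he, heq⟩ := hv; exact ⟨e, h he, heq⟩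

lemma covV_insert {g : E} {M : Finset E} {v : U ⊕ W} (hv : CovV eu ew (insert g M) v) :
    CovV eu ew M v ∨ v = Sum.inl (eu g) ∨ v = Sum.inr (ew g) := by
  rcases v with u | w
  · obtain ⟨e, he, heq⟩ := hv
    rcases Finset.mem_insert.1 he with rfl | he
    · exact Or.inr (Or.inl (by rw [heq]))
    · exact Or.inl ⟨e, he, heq⟩
  · obtain ⟨e, he, heq⟩ := hv
    rcases Finset.mem_insert.1 he with rfl | he
    · exact Or.inr (Or.inr (by rw [heq]))
    · exact Or.inl ⟨e, he, heq⟩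

lemma swap_insert_comm {e₀ e : E} (hu : eu e ≠ eu e₀) (hw : ew e ≠ ew e₀) (M : Finset E) :
    swapIn eu ew (insert e₀ M) e = insert e₀ (swapIn eu ew M e) := by
  rw [swapIn, swapIn, Finset.filter_insert, if_pos ⟨fun h => hu h.symm, fun h => hw h.symm⟩,
    Finset.insert_comm]

lemma commit_step (T : Finset E) (P : Finset (U ⊕ W))
    (IH : ∀ T' P', T'.card < T.card →
      (∃ N', N' ⊆ T' ∧ IsMatching eu ew N' ∧ ∀ v ∈ P', CovV eu ew N' v) →
      ∃ M, M ⊆ T' ∧ IsMatching eu ew M ∧ (∀ v ∈ P', CovV eu ew M v) ∧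
        ∀ e ∈ T', e ∉ M → ¬ Block eu ew pU pW P' M e)
    (e₀ : E) (he₀T : e₀ ∈ T) (N : Finset E) (hNT : N ⊆ T) (hNm : IsMatching eu ew N)
    (hNcov : ∀ v ∈ P, CovV eu ew N v) (he₀N : e₀ ∈ N)
    (HK : ∀ M, M ⊆ T → IsMatching eu ew M → e₀ ∈ M → (∀ v ∈ P, CovV eu ew M v) →
      ∀ e ∈ T, e ∉ M → (eu e = eu e₀ ∨ ew e = ew e₀) → ¬ Block eu ew pU pW P M e) :
    ∃ M, M ⊆ T ∧ IsMatching eu ew M ∧ (∀ v ∈ P, CovV eu ew M v) ∧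
      ∀ e ∈ T, e ∉ M → ¬ Block eu ew pU pW P M e := by
  classical
  set T' := T.filter (fun e => eu e ≠ eu e₀ ∧ ew e ≠ ew e₀) with hT'
  set P' := (P.erase (Sum.inl (eu e₀))).erase (Sum.inr (ew e₀)) with hP'
  have hT'sub : T' ⊆ T := Finset.filter_subset _ _
  have hT'card : T'.card < T.card := by
    apply Finset.card_lt_card
    rw [Finset.ssubset_iff_of_subset hT'sub]
    refine ⟨e₀, he₀T, ?_⟩
    rw [hT']
    intro h
    exact (Finset.mem_filter.1 h).2.1 rfl
  have hP'P : ∀ v ∈ P', v ∈ P := by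
    intro v hv
    exact Finset.mem_of_mem_erase (Finset.mem_of_mem_erase hv)
  have hpre : ∃ N', N' ⊆ T' ∧ IsMatching eu ew N' ∧ ∀ v ∈ P', CovV eu ew N' v := by
    refine ⟨N.erase e₀, ?_, ?_, ?_⟩
    · intro f hf
      obtain ⟨hfne, hfN⟩ := Finset.mem_erase.1 hf
      refine Finset.mem_filter.2 ⟨hNT hfN, (hNm f hfN e₀ he₀N hfne).1, (hNm f hfN e₀ he₀N hfne).2⟩
    · intro x hx y hy hxy
      exact hNm x (Finset.mem_of_mem_erase hx) y (Finset.mem_of_mem_erase hy) hxy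
    · intro v hv
      have hvP : v ∈ P := hP'P v hv
      have hvcov := hNcov v hvP
      rcases v with u | w
      · obtain ⟨h, hh, hheq⟩ := hvcov
        have hne : h ≠ e₀ := by
          rintro rfl
          exact (Finset.mem_erase.1 (Finset.mem_of_mem_erase hv)).1 (by rw [hheq])
        exact ⟨h, Finset.mem_erase.2 ⟨hne, hh⟩, hheq⟩
      · obtain ⟨h, hh, hheq⟩ := hvcov
        have hne : h ≠ e₀ := by
          rintro rfl
          exact (Finset.mem_erase.1 hv).1 (by rw [hheq])
        exact ⟨h, Finset.mem_erase.2 ⟨hne, hh⟩, hheq⟩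
  obtain ⟨M', hM'T, hM'm, hM'cov, hM'stab⟩ := IH T' P' hT'card hpre
  have hM'eu : ∀ f ∈ M', eu f ≠ eu e₀ := fun f hf => (Finset.mem_filter.1 (hM'T hf)).2.1
  have hM'ew : ∀ f ∈ M', ew f ≠ ew e₀ := fun f hf => (Finset.mem_filter.1 (hM'T hf)).2.2
  have he₀M' : e₀ ∉ M' := fun h => hM'eu e₀ h rfl
  have hMm : IsMatching eu ew (insert e₀ M') :=
    insert_matching eu ew hM'm (fun f hf h => hM'eu f hf h) (fun f hf h => hM'ew f hf h)
  have hMT : insert e₀ M' ⊆ T := by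
    intro f hf
    rcases Finset.mem_insert.1 hf with rfl | hf
    · exact he₀T
    · exact hT'sub (hM'T hf)
  have hMcov : ∀ v ∈ P, CovV eu ew (insert e₀ M') v := by
    intro v hv
    by_cases h1 : v = Sum.inl (eu e₀)
    · subst h1; exact ⟨e₀, Finset.mem_insert_self _ _, rfl⟩
    by_cases h2 : v = Sum.inr (ew e₀)
    · subst h2; exact ⟨e₀, Finset.mem_insert_self _ _, rfl⟩
    have : v ∈ P' := Finset.mem_erase.2 ⟨h2, Finset.mem_erase.2 ⟨h1, hv⟩⟩
    exact covV_mono eu ew (Finset.subset_insert _ _) (hM'cov v this)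
  refine ⟨insert e₀ M', hMT, hMm, hMcov, ?_⟩
  intro e heT heM hb
  by_cases hside : eu e = eu e₀ ∨ ew e = ew e₀
  · exact HK (insert e₀ M') hMT hMm (Finset.mem_insert_self _ _) hMcov e heT heM hside hb
  · push_neg at hside
    obtain ⟨hu, hw⟩ := hside
    have heT' : e ∈ T' := Finset.mem_filter.2 ⟨heT, hu, hw⟩
    have heM' : e ∉ M' := fun h => heM (Finset.mem_insert.2 (Or.inr h))
    apply hM'stab e heT' heM'
    obtain ⟨hb1, hb2, hb3⟩ := hb
    refine ⟨?_, ?_, ?_⟩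
    · intro f hf heq
      exact hb1 f (Finset.mem_insert.2 (Or.inr hf)) heq
    · intro f hf heq
      exact hb2 f (Finset.mem_insert.2 (Or.inr hf)) heq
    · intro v hv hcov
      have hvP : v ∈ P := hP'P v hv
      have h3 := hb3 v hvP (covV_mono eu ew (Finset.subset_insert _ _) hcov)
      rw [swap_insert_comm eu ew hu hw] at h3
      rcases covV_insert eu ew h3 with h | h | h
      · exact h
      · exact absurd h (Finset.mem_erase.1 (Finset.mem_of_mem_erase hv)).1
      · exact absurd h (Finset.mem_erase.1 hv).1

end Star

end CGproof

namespace CGproof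

variable {U W E : Type*} [Fintype U] [Fintype W] [Fintype E] [DecidableEq E]

section HK

variable (eu : E → U) (ew : E → W) (pU pW : E → ℝ)

lemma HK_left (T : Finset E) (P : Finset (U ⊕ W)) (e₀ : E)
    (haP : Sum.inl (eu e₀) ∈ P)
    (hpar : ∀ e ∈ T, eu e = eu e₀ → ew e = ew e₀ → ¬ (keyU pU e₀ < keyU pU e))
    (hK4 : Sum.inr (ew e₀) ∈ P ∨ ∀ e ∈ T, eu e = eu e₀ → ¬ (keyU pU e₀ < keyU pU e)) :
    ∀ M, M ⊆ T → IsMatching eu ew M → e₀ ∈ M → (∀ v ∈ P, CovV eu ew M v) →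
      ∀ e ∈ T, e ∉ M → (eu e = eu e₀ ∨ ew e = ew e₀) → ¬ Block eu ew pU pW P M e := by
  intro M hMT hMm he₀M hMcov e heT heM hside hb
  obtain ⟨hb1, hb2, hb3⟩ := hb
  by_cases hu : eu e = eu e₀
  · by_cases hw : ew e = ew e₀
    · exact hpar e heT hu hw (hb1 e₀ he₀M hu.symm)
    · rcases hK4 with hbP | htop
      · have hcovM : CovV eu ew M (Sum.inr (ew e₀)) := ⟨e₀, he₀M, rfl⟩
        have h3 := hb3 (Sum.inr (ew e₀)) hbP hcovM
        obtain ⟨h, hh, hhw⟩ := h3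
        rcases Finset.mem_insert.1 hh with rfl | hh
        · exact hw hhw
        · obtain ⟨hhM, hφ1, hφ2⟩ := Finset.mem_filter.1 hh
          have : h = e₀ := eq_of_ew eu ew hMm hhM he₀M hhw
          subst this
          exact hφ1 (hu.symm)
      · exact htop e heT hu (hb1 e₀ he₀M hu.symm)
  · have hw : ew e = ew e₀ := hside.resolve_left hu
    have hcovM : CovV eu ew M (Sum.inl (eu e₀)) := ⟨e₀, he₀M, rfl⟩
    have h3 := hb3 (Sum.inl (eu e₀)) haP hcovM
    obtain ⟨h, hh, hhu⟩ := h3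
    rcases Finset.mem_insert.1 hh with rfl | hh
    · exact hu hhu
    · obtain ⟨hhM, hφ1, hφ2⟩ := Finset.mem_filter.1 hh
      have : h = e₀ := eq_of_eu eu ew hMm hhM he₀M hhu
      subst this
      exact hφ2 (hw.symm)

lemma HK_right (T : Finset E) (P : Finset (U ⊕ W)) (e₀ : E)
    (hbP : Sum.inr (ew e₀) ∈ P)
    (hpar : ∀ e ∈ T, eu e = eu e₀ → ew e = ew e₀ → ¬ (keyW pW e₀ < keyW pW e))
    (hK4 : Sum.inl (eu e₀) ∈ P ∨ ∀ e ∈ T, ew e = ew e₀ → ¬ (keyW pW e₀ < keyW pW e)) :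
    ∀ M, M ⊆ T → IsMatching eu ew M → e₀ ∈ M → (∀ v ∈ P, CovV eu ew M v) →
      ∀ e ∈ T, e ∉ M → (eu e = eu e₀ ∨ ew e = ew e₀) → ¬ Block eu ew pU pW P M e := by
  intro M hMT hMm he₀M hMcov e heT heM hside hb
  obtain ⟨hb1, hb2, hb3⟩ := hb
  by_cases hw : ew e = ew e₀
  · by_cases hu : eu e = eu e₀
    · exact hpar e heT hu hw (hb2 e₀ he₀M hw.symm)
    · rcases hK4 with haP | htop
      · have hcovM : CovV eu ew M (Sum.inl (eu e₀)) := ⟨e₀, he₀M, rfl⟩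
        have h3 := hb3 (Sum.inl (eu e₀)) haP hcovM
        obtain ⟨h, hh, hhu⟩ := h3
        rcases Finset.mem_insert.1 hh with rfl | hh
        · exact hu hhu
        · obtain ⟨hhM, hφ1, hφ2⟩ := Finset.mem_filter.1 hh
          have : h = e₀ := eq_of_eu eu ew hMm hhM he₀M hhu
          subst this
          exact hφ2 (hw.symm)
      · exact htop e heT hw (hb2 e₀ he₀M hw.symm)
  · have hu : eu e = eu e₀ := hside.resolve_right hw
    have hcovM : CovV eu ew M (Sum.inr (ew e₀)) := ⟨e₀, he₀M, rfl⟩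
    have h3 := hb3 (Sum.inr (ew e₀)) hbP hcovM
    obtain ⟨h, hh, hhw⟩ := h3
    rcases Finset.mem_insert.1 hh with rfl | hh
    · exact hw hhw
    · obtain ⟨hhM, hφ1, hφ2⟩ := Finset.mem_filter.1 hh
      have : h = e₀ := eq_of_ew eu ew hMm hhM he₀M hhw
      subst this
      exact hφ1 (hu.symm)

end HK

end CGproof

namespace CGproof

variable {U W E : Type*} [Fintype U] [Fintype W] [Fintype E] [DecidableEq E]

section Commit

variable (eu : E → U) (ew : E → W) (pU pW : E → ℝ)

/-- Conclusion form of the master lemma. -/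
def StarConcl (T : Finset E) (P : Finset (U ⊕ W)) : Prop :=
  ∃ M, M ⊆ T ∧ IsMatching eu ew M ∧ (∀ v ∈ P, CovV eu ew M v) ∧
    ∀ e ∈ T, e ∉ M → ¬ Block eu ew pU pW P M e

def StarIH (T : Finset E) : Prop :=
  ∀ T' P', T'.card < T.card →
    (∃ N', N' ⊆ T' ∧ IsMatching eu ew N' ∧ ∀ v ∈ P', CovV eu ew N' v) →
    StarConcl eu ew pU pW T' P'

lemma commitU (T : Finset E) (P : Finset (U ⊕ W)) (IH : StarIH eu ew pU pW T)
    (u : U) (huP : Sum.inl u ∈ P) (t : E) (htT : t ∈ T) (htu : eu t = u)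
    (htop : ∀ f ∈ T, eu f = u → keyU pU f ≤ keyU pU t)
    (N' : Finset E) (hN'T : N' ⊆ T) (hN'm : IsMatching eu ew N')
    (hN'cov : ∀ v ∈ P, CovV eu ew N' v) (htN' : t ∈ N') :
    StarConcl eu ew pU pW T P := by
  apply commit_step eu ew pU pW T P IH t htT N' hN'T hN'm hN'cov htN'
  apply HK_left eu ew pU pW T P t
  · rw [htu]; exact huP
  · intro e heT heq _ hlt
    exact not_lt.2 (htop e heT (by rw [heq, htu])) hlt
  · right
    intro e heT heq hlt
    exact not_lt.2 (htop e heT (by rw [heq, htu])) hlt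

lemma commitW (T : Finset E) (P : Finset (U ⊕ W)) (IH : StarIH eu ew pU pW T)
    (w : W) (hwP : Sum.inr w ∈ P) (t : E) (htT : t ∈ T) (htw : ew t = w)
    (htop : ∀ f ∈ T, ew f = w → keyW pW f ≤ keyW pW t)
    (N' : Finset E) (hN'T : N' ⊆ T) (hN'm : IsMatching eu ew N')
    (hN'cov : ∀ v ∈ P, CovV eu ew N' v) (htN' : t ∈ N') :
    StarConcl eu ew pU pW T P := by
  apply commit_step eu ew pU pW T P IH t htT N' hN'T hN'm hN'cov htN'
  apply HK_right eu ew pU pW T P t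
  · rw [htw]; exact hwP
  · intro e heT _ heq hlt
    exact not_lt.2 (htop e heT (by rw [heq, htw])) hlt
  · right
    intro e heT heq hlt
    exact not_lt.2 (htop e heT (by rw [heq, htw])) hlt

lemma commitPar (T : Finset E) (P : Finset (U ⊕ W)) (IH : StarIH eu ew pU pW T)
    (t : E) (htT : t ∈ T) (haP : Sum.inl (eu t) ∈ P) (hbP : Sum.inr (ew t) ∈ P)
    (hpar : ∀ f ∈ T, eu f = eu t → ew f = ew t → keyU pU f ≤ keyU pU t)
    (N' : Finset E) (hN'T : N' ⊆ T) (hN'm : IsMatching eu ew N')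
    (hN'cov : ∀ v ∈ P, CovV eu ew N' v) (htN' : t ∈ N') :
    StarConcl eu ew pU pW T P := by
  apply commit_step eu ew pU pW T P IH t htT N' hN'T hN'm hN'cov htN'
  apply HK_left eu ew pU pW T P t haP
  · intro e heT hequ heqw hlt
    exact not_lt.2 (hpar e heT hequ heqw) hlt
  · left; exact hbP

end Commit

end CGproof

namespace CGproof

variable {U W E : Type*} [Fintype U] [Fintype W] [Fintype E] [DecidableEq E]

section Constr

variable (eu : E → U) (ew : E → W)

/-- Construction used in cases (ii) and (iv): exchange `N(u)` and `N(ew t)` for `t`. -/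
lemma constrA (T : Finset E) (P : Finset (U ⊕ W)) (N : Finset E)
    (hNT : N ⊆ T) (hNm : IsMatching eu ew N) (hNcov : ∀ v ∈ P, CovV eu ew N v)
    (hnc1 : ∀ h ∈ N, ¬(Sum.inl (eu h) ∈ P ∧ Sum.inr (ew h) ∈ P))
    (u : U) (huP : Sum.inl u ∈ P) (t : E) (htT : t ∈ T) (htu : eu t = u)
    (nu : E) (hnuN : nu ∈ N) (hnuu : eu nu = u)
    (nw : E) (hnwN : nw ∈ N) (hnww : ew nw = ew t)
    (hnwP : Sum.inl (eu nw) ∉ P) :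
    ∃ N', N' ⊆ T ∧ IsMatching eu ew N' ∧ (∀ v ∈ P, CovV eu ew N' v) ∧ t ∈ N' := by
  classical
  refine ⟨insert t ((N.erase nu).erase nw), ?_, ?_, ?_, Finset.mem_insert_self _ _⟩
  · intro f hf
    rcases Finset.mem_insert.1 hf with rfl | hf
    · exact htT
    · exact hNT (Finset.mem_of_mem_erase (Finset.mem_of_mem_erase hf))
  · apply insert_matching eu ew
    · intro x hx y hy hxy
      exact hNm x (Finset.mem_of_mem_erase (Finset.mem_of_mem_erase hx))
        y (Finset.mem_of_mem_erase (Finset.mem_of_mem_erase hy)) hxy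
    · intro f hf h
      have hfN : f ∈ N := Finset.mem_of_mem_erase (Finset.mem_of_mem_erase hf)
      have : f = nu := eq_of_eu eu ew hNm hfN hnuN (by rw [h, htu, hnuu])
      exact (Finset.mem_erase.1 (Finset.mem_of_mem_erase hf)).1 this
    · intro f hf h
      have hfN : f ∈ N := Finset.mem_of_mem_erase (Finset.mem_of_mem_erase hf)
      have : f = nw := eq_of_ew eu ew hNm hfN hnwN (by rw [h, hnww])
      exact (Finset.mem_erase.1 hf).1 this
  · intro v hv
    obtain hcov := hNcov v hv
    rcases v with u' | w'
    · obtain ⟨h, hhN, hhu⟩ := hcov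
      by_cases h1 : h = nu
      · subst h1
        exact ⟨t, Finset.mem_insert_self _ _, by rw [htu, ← hnuu, hhu]⟩
      by_cases h2 : h = nw
      · subst h2
        rw [← hhu] at hv
        exact absurd hv hnwP
      · exact ⟨h, Finset.mem_insert.2 (Or.inr (Finset.mem_erase.2 ⟨h2,
          Finset.mem_erase.2 ⟨h1, hhN⟩⟩)), hhu⟩
    · obtain ⟨h, hhN, hhw⟩ := hcov
      by_cases h2 : h = nw
      · subst h2
        exact ⟨t, Finset.mem_insert_self _ _, by rw [← hnww, hhw]⟩
      by_cases h1 : h = nu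
      · have hl : Sum.inl (eu h) ∈ P := by rw [h1, hnuu]; exact huP
        have hr : Sum.inr (ew h) ∈ P := by rw [hhw]; exact hv
        exact absurd ⟨hl, hr⟩ (hnc1 h hhN)
      · exact ⟨h, Finset.mem_insert.2 (Or.inr (Finset.mem_erase.2 ⟨h2,
          Finset.mem_erase.2 ⟨h1, hhN⟩⟩)), hhw⟩

/-- Construction used in case (iii): `ew t` is `N`-unmatched. -/
lemma constrB (T : Finset E) (P : Finset (U ⊕ W)) (N : Finset E)
    (hNT : N ⊆ T) (hNm : IsMatching eu ew N) (hNcov : ∀ v ∈ P, CovV eu ew N v)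
    (hnc1 : ∀ h ∈ N, ¬(Sum.inl (eu h) ∈ P ∧ Sum.inr (ew h) ∈ P))
    (u : U) (huP : Sum.inl u ∈ P) (t : E) (htT : t ∈ T) (htu : eu t = u)
    (nu : E) (hnuN : nu ∈ N) (hnuu : eu nu = u)
    (hnow : ∀ h ∈ N, ew h ≠ ew t) :
    ∃ N', N' ⊆ T ∧ IsMatching eu ew N' ∧ (∀ v ∈ P, CovV eu ew N' v) ∧ t ∈ N' := by
  classical
  refine ⟨insert t (N.erase nu), ?_, ?_, ?_, Finset.mem_insert_self _ _⟩
  · intro f hf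
    rcases Finset.mem_insert.1 hf with rfl | hf
    · exact htT
    · exact hNT (Finset.mem_of_mem_erase hf)
  · apply insert_matching eu ew
    · intro x hx y hy hxy
      exact hNm x (Finset.mem_of_mem_erase hx) y (Finset.mem_of_mem_erase hy) hxy
    · intro f hf h
      have hfN : f ∈ N := Finset.mem_of_mem_erase hf
      have : f = nu := eq_of_eu eu ew hNm hfN hnuN (by rw [h, htu, hnuu])
      exact (Finset.mem_erase.1 hf).1 this
    · intro f hf h
      exact hnow f (Finset.mem_of_mem_erase hf) h
  · intro v hv
    obtain hcov := hNcov v hv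
    rcases v with u' | w'
    · obtain ⟨h, hhN, hhu⟩ := hcov
      by_cases h1 : h = nu
      · subst h1
        exact ⟨t, Finset.mem_insert_self _ _, by rw [htu, ← hnuu, hhu]⟩
      · exact ⟨h, Finset.mem_insert.2 (Or.inr (Finset.mem_erase.2 ⟨h1, hhN⟩)), hhu⟩
    · obtain ⟨h, hhN, hhw⟩ := hcov
      by_cases h1 : h = nu
      · have hl : Sum.inl (eu h) ∈ P := by rw [h1, hnuu]; exact huP
        have hr : Sum.inr (ew h) ∈ P := by rw [hhw]; exact hv
        exact absurd ⟨hl, hr⟩ (hnc1 h hhN)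
      · exact ⟨h, Finset.mem_insert.2 (Or.inr (Finset.mem_erase.2 ⟨h1, hhN⟩)), hhw⟩

end Constr

end CGproof

namespace CGproof

variable {U W E : Type*} [Fintype U] [Fintype W] [Fintype E] [DecidableEq E]

section Cycle

variable (eu : E → U) (ew : E → W)

lemma constrCycle (T : Finset E) (P : Finset (U ⊕ W)) (N : Finset E)
    (hNT : N ⊆ T) (hNm : IsMatching eu ew N) (hNcov : ∀ v ∈ P, CovV eu ew N v)
    (hnc1 : ∀ h ∈ N, ¬(Sum.inl (eu h) ∈ P ∧ Sum.inr (ew h) ∈ P))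
    (u₀ : U) (hu₀ : Sum.inl u₀ ∈ P)
    (tp : U → E)
    (htpT : ∀ u, Sum.inl u ∈ P → tp u ∈ T)
    (htpu : ∀ u, Sum.inl u ∈ P → eu (tp u) = u)
    (Ne' : U → E)
    (hNeN : ∀ u, Sum.inl u ∈ P → Ne' u ∈ N)
    (hNeu : ∀ u, Sum.inl u ∈ P → eu (Ne' u) = u)
    (Nw : U → E)
    (hNwN : ∀ u, Sum.inl u ∈ P → Nw u ∈ N)
    (hNww : ∀ u, Sum.inl u ∈ P → ew (Nw u) = ew (tp u))
    (hF : ∀ u, Sum.inl u ∈ P → Sum.inl (eu (Nw u)) ∈ P) :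
    ∃ (ua : U) (N' : Finset E), Sum.inl ua ∈ P ∧ N' ⊆ T ∧ IsMatching eu ew N' ∧
      (∀ v ∈ P, CovV eu ew N' v) ∧ tp ua ∈ N' := by
  classical
  set F : U → U := fun u => eu (Nw u) with hFdef
  set it : ℕ → U := fun k => F^[k] u₀ with hit
  have hitsucc : ∀ k, it (k + 1) = F (it k) := by
    intro k
    rw [hit]
    exact Function.iterate_succ_apply' F k u₀
  have hitP : ∀ k, Sum.inl (it k) ∈ P := by
    intro k
    induction k with
    | zero => simpa [hit] using hu₀
    | succ k ihk =>
      rw [hitsucc k, hFdef]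
      exact hF (it k) ihk
  obtain ⟨i1, j1, hij, heq⟩ : ∃ i j : ℕ, i < j ∧ it i = it j := by
    obtain ⟨x, y, hxy, hxyeq⟩ := Fintype.exists_ne_map_eq_of_card_lt
      (fun k : Fin (Fintype.card U + 1) => it k) (by simp)
    rcases lt_or_gt_of_ne hxy with h | h
    · exact ⟨x, y, h, hxyeq⟩
    · exact ⟨y, x, h, hxyeq.symm⟩
  have hQ : ∃ j, ∃ i, i < j ∧ it i = it j := ⟨j1, i1, hij, heq⟩
  set jm := Nat.find hQ with hjm
  obtain ⟨i₀, hi₀lt, hi₀eq⟩ := Nat.find_spec hQ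
  have hdistinct : ∀ s t, s < t → t < jm → it s ≠ it t := by
    intro s t hst htm hcon
    exact Nat.find_min hQ htm ⟨s, hst, hcon⟩
  set O : Finset U := (Finset.Ico i₀ jm).image it with hO
  have hmemO : ∀ x, x ∈ O ↔ ∃ k, i₀ ≤ k ∧ k < jm ∧ it k = x := by
    intro x
    rw [hO]
    simp only [Finset.mem_image, Finset.mem_Ico]
    constructor
    · rintro ⟨k, ⟨h1, h2⟩, h3⟩; exact ⟨k, h1, h2, h3⟩
    · rintro ⟨k, h1, h2, h3⟩; exact ⟨k, ⟨h1, h2⟩, h3⟩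
  have huaO : it i₀ ∈ O := (hmemO _).2 ⟨i₀, le_rfl, hi₀lt, rfl⟩
  have hOP : ∀ x ∈ O, Sum.inl x ∈ P := by
    intro x hx; obtain ⟨k, _, _, rfl⟩ := (hmemO x).1 hx; exact hitP k
  have hFO : ∀ x ∈ O, F x ∈ O := by
    intro x hx
    obtain ⟨k, hk1, hk2, rfl⟩ := (hmemO x).1 hx
    by_cases hk3 : k + 1 < jm
    · exact (hmemO _).2 ⟨k + 1, by omega, hk3, hitsucc k⟩
    · have hk4 : k + 1 = jm := by omega
      have h5 : F (it k) = it i₀ := by rw [← hitsucc k, hk4, ← hi₀eq]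
      rw [h5]; exact huaO
  have hFinj : ∀ x ∈ O, ∀ y ∈ O, F x = F y → x = y := by
    intro x hx y hy hxyF
    obtain ⟨k, hk1, hk2, rfl⟩ := (hmemO x).1 hx
    obtain ⟨l, hl1, hl2, rfl⟩ := (hmemO y).1 hy
    rw [← hitsucc k, ← hitsucc l] at hxyF
    by_cases hk3 : k + 1 < jm <;> by_cases hl3 : l + 1 < jm
    · by_contra hne
      have hkl : k ≠ l := fun h => hne (by rw [h])
      rcases lt_or_gt_of_ne hkl with h | h
      · exact hdistinct (k + 1) (l + 1) (by omega) hl3 hxyF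
      · exact hdistinct (l + 1) (k + 1) (by omega) hk3 hxyF.symm
    · have hl4 : l + 1 = jm := by omega
      have h5 : it (k + 1) = it i₀ := by rw [hxyF, hl4, ← hi₀eq]
      exact (hdistinct i₀ (k + 1) (by omega) hk3 h5.symm).elim
    · have hk4 : k + 1 = jm := by omega
      have h5 : it (l + 1) = it i₀ := by rw [← hxyF, hk4, ← hi₀eq]
      exact (hdistinct i₀ (l + 1) (by omega) hl3 h5.symm).elim
    · have : k = l := by omega
      rw [this]
  have hNwNe : ∀ x ∈ O, Nw x = Ne' (F x) := by
    intro x hx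
    have hx' := hOP x hx
    have hFx' := hF x hx'
    exact eq_of_eu eu ew hNm (hNwN x hx') (hNeN _ hFx') (by rw [hNeu _ hFx'])
  have hmid : ∀ x ∈ O, ∀ y ∈ O, ew (tp x) = ew (tp y) → x = y := by
    intro x hx y hy hmideq
    apply hFinj x hx y hy
    have h6 : Nw x = Nw y := eq_of_ew eu ew hNm (hNwN x (hOP x hx)) (hNwN y (hOP y hy))
      (by rw [hNww x (hOP x hx), hNww y (hOP y hy), hmideq])
    rw [hFdef]
    simp only
    rw [h6]
  set R : Finset E := O.image Ne' with hR
  set N' : Finset E := (N \ R) ∪ O.image tp with hN'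
  have hN'T : N' ⊆ T := by
    intro f hf
    rcases Finset.mem_union.1 hf with hf | hf
    · exact hNT (Finset.mem_sdiff.1 hf).1
    · obtain ⟨x, hx, rfl⟩ := Finset.mem_image.1 hf
      exact htpT x (hOP x hx)
  have htpua : tp (it i₀) ∈ N' :=
    Finset.mem_union_right _ (Finset.mem_image.2 ⟨it i₀, huaO, rfl⟩)
  have hcross : ∀ a ∈ N \ R, ∀ y ∈ O, eu a ≠ eu (tp y) ∧ ew a ≠ ew (tp y) := by
    intro a ha y hy
    have haN := (Finset.mem_sdiff.1 ha).1
    constructor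
    · intro h
      have h7 : a = Ne' y := eq_of_eu eu ew hNm haN (hNeN y (hOP y hy))
        (by rw [h, htpu y (hOP y hy), hNeu y (hOP y hy)])
      exact (Finset.mem_sdiff.1 ha).2 (by rw [h7, hR]; exact Finset.mem_image.2 ⟨y, hy, rfl⟩)
    · intro h
      have h7 : a = Nw y := eq_of_ew eu ew hNm haN (hNwN y (hOP y hy))
        (by rw [h, hNww y (hOP y hy)])
      have h8 : a = Ne' (F y) := by rw [h7]; exact hNwNe y hy
      exact (Finset.mem_sdiff.1 ha).2
        (by rw [h8, hR]; exact Finset.mem_image.2 ⟨F y, hFO y hy, rfl⟩)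
  have hN'm : IsMatching eu ew N' := by
    intro a ha b hb hab
    rcases Finset.mem_union.1 ha with ha | ha <;> rcases Finset.mem_union.1 hb with hb | hb
    · exact hNm a (Finset.mem_sdiff.1 ha).1 b (Finset.mem_sdiff.1 hb).1 hab
    · obtain ⟨y, hy, rfl⟩ := Finset.mem_image.1 hb
      exact hcross a ha y hy
    · obtain ⟨y, hy, rfl⟩ := Finset.mem_image.1 ha
      have := hcross b hb y hy
      exact ⟨fun h => this.1 h.symm, fun h => this.2 h.symm⟩
    · obtain ⟨x, hx, rfl⟩ := Finset.mem_image.1 ha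
      obtain ⟨y, hy, rfl⟩ := Finset.mem_image.1 hb
      have hxy : x ≠ y := fun h => hab (by rw [h])
      constructor
      · rw [htpu x (hOP x hx), htpu y (hOP y hy)]; exact hxy
      · intro h; exact hxy (hmid x hx y hy h)
  have hN'cov : ∀ v ∈ P, CovV eu ew N' v := by
    intro v hv
    obtain hcov := hNcov v hv
    rcases v with u' | w'
    · obtain ⟨h, hhN, hhu⟩ := hcov
      by_cases hhR : h ∈ R
      · obtain ⟨x, hx, rfl⟩ := Finset.mem_image.1 hhR
        refine ⟨tp x, Finset.mem_union_right _ (Finset.mem_image.2 ⟨x, hx, rfl⟩), ?_⟩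
        rw [htpu x (hOP x hx), ← hNeu x (hOP x hx), hhu]
      · exact ⟨h, Finset.mem_union_left _ (Finset.mem_sdiff.2 ⟨hhN, hhR⟩), hhu⟩
    · obtain ⟨h, hhN, hhw⟩ := hcov
      by_cases hhR : h ∈ R
      · obtain ⟨x, hx, rfl⟩ := Finset.mem_image.1 hhR
        have hl : Sum.inl (eu (Ne' x)) ∈ P := by rw [hNeu x (hOP x hx)]; exact hOP x hx
        have hr : Sum.inr (ew (Ne' x)) ∈ P := by rw [hhw]; exact hv
        exact absurd ⟨hl, hr⟩ (hnc1 _ hhN)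
      · exact ⟨h, Finset.mem_union_left _ (Finset.mem_sdiff.2 ⟨hhN, hhR⟩), hhw⟩
  exact ⟨it i₀, N', hitP i₀, hN'T, hN'm, hN'cov, htpua⟩

end Cycle

end CGproof

namespace CGproof

variable {U W E : Type*} [Fintype U] [Fintype W] [Fintype E] [DecidableEq E]

section Swap

variable (eu : E → U) (ew : E → W)

lemma swap_mem_inl (P : Finset (U ⊕ W)) (w : W) :
    Sum.inl w ∈ P.image Sum.swap ↔ Sum.inr w ∈ P := by
  constructor
  · intro h
    obtain ⟨v, hv, hveq⟩ := Finset.mem_image.1 h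
    rcases v with u' | w'
    · simp at hveq
    · simp at hveq; subst hveq; exact hv
  · intro h
    exact Finset.mem_image.2 ⟨Sum.inr w, h, rfl⟩

lemma swap_mem_inr (P : Finset (U ⊕ W)) (u : U) :
    Sum.inr u ∈ P.image Sum.swap ↔ Sum.inl u ∈ P := by
  constructor
  · intro h
    obtain ⟨v, hv, hveq⟩ := Finset.mem_image.1 h
    rcases v with u' | w'
    · simp at hveq; subst hveq; exact hv
    · simp at hveq
  · intro h
    exact Finset.mem_image.2 ⟨Sum.inl u, h, rfl⟩

lemma covV_swap (M : Finset E) (v : U ⊕ W) :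
    CovV ew eu M (Sum.swap v) ↔ CovV eu ew M v := by
  rcases v with u | w
  · exact Iff.rfl
  · exact Iff.rfl

lemma covP_swap (M : Finset E) (P : Finset (U ⊕ W)) :
    (∀ v ∈ P.image Sum.swap, CovV ew eu M v) ↔ (∀ v ∈ P, CovV eu ew M v) := by
  constructor
  · intro h v hv
    exact (covV_swap eu ew M v).1 (h (Sum.swap v) (Finset.mem_image.2 ⟨v, hv, rfl⟩))
  · intro h v hv
    obtain ⟨v', hv', rfl⟩ := Finset.mem_image.1 hv
    exact (covV_swap eu ew M v').2 (h v' hv')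

lemma hnc1_swap (P : Finset (U ⊕ W)) (N : Finset E)
    (h : ∀ g ∈ N, ¬(Sum.inl (eu g) ∈ P ∧ Sum.inr (ew g) ∈ P)) :
    ∀ g ∈ N, ¬(Sum.inl (ew g) ∈ P.image Sum.swap ∧ Sum.inr (eu g) ∈ P.image Sum.swap) := by
  intro g hg ⟨h1, h2⟩
  exact h g hg ⟨(swap_mem_inr P (eu g)).1 h2, (swap_mem_inl P (ew g)).1 h1⟩

end Swap

end CGproof

namespace CGproof

variable {U W E : Type*} [Fintype U] [Fintype W] [Fintype E] [DecidableEq E]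

section Master

variable (eu : E → U) (ew : E → W) (pU pW : E → ℝ)

theorem starMaster : ∀ (n : ℕ) (T : Finset E) (P : Finset (U ⊕ W)), T.card ≤ n →
    (∃ N, N ⊆ T ∧ IsMatching eu ew N ∧ ∀ v ∈ P, CovV eu ew N v) →
    StarConcl eu ew pU pW T P := by
  intro n
  induction n with
  | zero =>
    intro T P hTcard ⟨N, hNT, hNm, hNcov⟩
    refine ⟨N, hNT, hNm, hNcov, ?_⟩
    intro e heT
    have : T = ∅ := Finset.card_eq_zero.1 (Nat.le_zero.1 hTcard)
    rw [this] at heT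
    exact absurd heT (Finset.notMem_empty e)
  | succ n ih =>
    intro T P hTcard ⟨N, hNT, hNm, hNcov⟩
    have IH : StarIH eu ew pU pW T := by
      intro T' P' hlt hpre
      exact ih T' P' (by omega) hpre
    by_cases hP : P.Nonempty
    · -- commit cases
      by_cases hc1 : ∃ h ∈ N, Sum.inl (eu h) ∈ P ∧ Sum.inr (ew h) ∈ P
      · -- parallel-class commit
        obtain ⟨n₀, hn₀N, hn₀l, hn₀r⟩ := hc1
        obtain ⟨t, htmem, htmax⟩ := Finset.exists_max_image
          (T.filter (fun e => eu e = eu n₀ ∧ ew e = ew n₀)) (keyU pU)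
          ⟨n₀, Finset.mem_filter.2 ⟨hNT hn₀N, rfl, rfl⟩⟩
        obtain ⟨htT, htu, htw⟩ : t ∈ T ∧ eu t = eu n₀ ∧ ew t = ew n₀ := by
          have := Finset.mem_filter.1 htmem
          exact ⟨this.1, this.2.1, this.2.2⟩
        have hN' : ∃ N', N' ⊆ T ∧ IsMatching eu ew N' ∧ (∀ v ∈ P, CovV eu ew N' v)
            ∧ t ∈ N' := by
          refine ⟨insert t (N.erase n₀), ?_, ?_, ?_, Finset.mem_insert_self _ _⟩
          · intro f hf
            rcases Finset.mem_insert.1 hf with rfl | hf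
            · exact htT
            · exact hNT (Finset.mem_of_mem_erase hf)
          · apply insert_matching eu ew
            · intro x hx y hy hxy
              exact hNm x (Finset.mem_of_mem_erase hx) y (Finset.mem_of_mem_erase hy) hxy
            · intro f hf h
              have : f = n₀ := eq_of_eu eu ew hNm (Finset.mem_of_mem_erase hf) hn₀N
                (by rw [h, htu])
              exact (Finset.mem_erase.1 hf).1 this
            · intro f hf h
              have : f = n₀ := eq_of_ew eu ew hNm (Finset.mem_of_mem_erase hf) hn₀N
                (by rw [h, htw])
              exact (Finset.mem_erase.1 hf).1 this
          · intro v hv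
            have hcov := hNcov v hv
            rcases v with u' | w'
            · obtain ⟨h, hhN, hhu⟩ := hcov
              by_cases h1 : h = n₀
              · exact ⟨t, Finset.mem_insert_self _ _, by rw [htu, ← h1, hhu]⟩
              · exact ⟨h, Finset.mem_insert.2 (Or.inr (Finset.mem_erase.2 ⟨h1, hhN⟩)), hhu⟩
            · obtain ⟨h, hhN, hhw⟩ := hcov
              by_cases h1 : h = n₀
              · exact ⟨t, Finset.mem_insert_self _ _, by rw [htw, ← h1, hhw]⟩
              · exact ⟨h, Finset.mem_insert.2 (Or.inr (Finset.mem_erase.2 ⟨h1, hhN⟩)), hhw⟩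
        obtain ⟨N', hN'T, hN'm, hN'cov, htN'⟩ := hN'
        apply commitPar eu ew pU pW T P IH t htT (by rw [htu]; exact hn₀l)
          (by rw [htw]; exact hn₀r) ?_ N' hN'T hN'm hN'cov htN'
        intro f hfT hfu hfw
        exact htmax f (Finset.mem_filter.2 ⟨hfT, by rw [hfu, htu], by rw [hfw, htw]⟩)
      · have hnc1 : ∀ h ∈ N, ¬(Sum.inl (eu h) ∈ P ∧ Sum.inr (ew h) ∈ P) := by
          push_neg at hc1
          intro h hh ⟨h1, h2⟩
          exact (hc1 h hh h1) h2
        by_cases hc3 : ∃ u t, Sum.inl u ∈ P ∧ t ∈ T ∧ eu t = u ∧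
            (∀ f ∈ T, eu f = u → keyU pU f ≤ keyU pU t) ∧ (∀ h ∈ N, ew h ≠ ew t)
        · obtain ⟨u, t, huP, htT, htu, htop, hnow⟩ := hc3
          obtain ⟨nu, hnuN, hnuu⟩ := hNcov (Sum.inl u) huP
          obtain ⟨N', hN'T, hN'm, hN'cov, htN'⟩ := constrB eu ew T P N hNT hNm hNcov hnc1
            u huP t htT htu nu hnuN hnuu hnow
          exact commitU eu ew pU pW T P IH u huP t htT htu htop N' hN'T hN'm hN'cov htN'
        by_cases hc3W : ∃ w t, Sum.inr w ∈ P ∧ t ∈ T ∧ ew t = w ∧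
            (∀ f ∈ T, ew f = w → keyW pW f ≤ keyW pW t) ∧ (∀ h ∈ N, eu h ≠ eu t)
        · obtain ⟨w, t, hwP, htT, htw, htop, hnow⟩ := hc3W
          obtain ⟨nw, hnwN, hnww⟩ := hNcov (Sum.inr w) hwP
          obtain ⟨N', hN'T, hN'm, hN'cov, htN'⟩ := constrB ew eu T (P.image Sum.swap) N hNT
            (matching_flip ew eu hNm) ((covP_swap eu ew N P).2 hNcov)
            (hnc1_swap eu ew P N hnc1)
            w ((swap_mem_inl P w).2 hwP) t htT htw nw hnwN hnww hnow
          exact commitW eu ew pU pW T P IH w hwP t htT htw htop N' hN'T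
            (matching_flip eu ew hN'm) ((covP_swap eu ew N' P).1 hN'cov) htN'
        by_cases hc4 : ∃ u t h, Sum.inl u ∈ P ∧ t ∈ T ∧ eu t = u ∧
            (∀ f ∈ T, eu f = u → keyU pU f ≤ keyU pU t) ∧ h ∈ N ∧ ew h = ew t ∧
            Sum.inl (eu h) ∉ P
        · obtain ⟨u, t, h, huP, htT, htu, htop, hhN, hhw, hhP⟩ := hc4
          obtain ⟨nu, hnuN, hnuu⟩ := hNcov (Sum.inl u) huP
          obtain ⟨N', hN'T, hN'm, hN'cov, htN'⟩ := constrA eu ew T P N hNT hNm hNcov hnc1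
            u huP t htT htu nu hnuN hnuu h hhN hhw hhP
          exact commitU eu ew pU pW T P IH u huP t htT htu htop N' hN'T hN'm hN'cov htN'
        by_cases hc4W : ∃ w t h, Sum.inr w ∈ P ∧ t ∈ T ∧ ew t = w ∧
            (∀ f ∈ T, ew f = w → keyW pW f ≤ keyW pW t) ∧ h ∈ N ∧ eu h = eu t ∧
            Sum.inr (ew h) ∉ P
        · obtain ⟨w, t, h, hwP, htT, htw, htop, hhN, hhu, hhP⟩ := hc4W
          obtain ⟨nw, hnwN, hnww⟩ := hNcov (Sum.inr w) hwP
          have hhP' : Sum.inl (ew h) ∉ P.image Sum.swap := by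
            rw [swap_mem_inl]; exact hhP
          obtain ⟨N', hN'T, hN'm, hN'cov, htN'⟩ := constrA ew eu T (P.image Sum.swap) N hNT
            (matching_flip ew eu hNm) ((covP_swap eu ew N P).2 hNcov)
            (hnc1_swap eu ew P N hnc1)
            w ((swap_mem_inl P w).2 hwP) t htT htw nw hnwN hnww h hhN hhu hhP'
          exact commitW eu ew pU pW T P IH w hwP t htT htw htop N' hN'T
            (matching_flip eu ew hN'm) ((covP_swap eu ew N' P).1 hN'cov) htN'
        · -- cycle case
          obtain ⟨v₀, hv₀⟩ := hP
          have htops : ∀ u : U, Sum.inl u ∈ P → ∃ t, t ∈ T ∧ eu t = u ∧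
              ∀ f ∈ T, eu f = u → keyU pU f ≤ keyU pU t := by
            intro u hu
            obtain ⟨e, heN, heu⟩ := hNcov (Sum.inl u) hu
            obtain ⟨t, htmem, htmax⟩ := Finset.exists_max_image
              (T.filter (fun f => eu f = u)) (keyU pU)
              ⟨e, Finset.mem_filter.2 ⟨hNT heN, heu⟩⟩
            exact ⟨t, (Finset.mem_filter.1 htmem).1, (Finset.mem_filter.1 htmem).2,
              fun f hf hfu => htmax f (Finset.mem_filter.2 ⟨hf, hfu⟩)⟩
          have htopsW : ∀ w : W, Sum.inr w ∈ P → ∃ t, t ∈ T ∧ ew t = w ∧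
              ∀ f ∈ T, ew f = w → keyW pW f ≤ keyW pW t := by
            intro w hw
            obtain ⟨e, heN, hew⟩ := hNcov (Sum.inr w) hw
            obtain ⟨t, htmem, htmax⟩ := Finset.exists_max_image
              (T.filter (fun f => ew f = w)) (keyW pW)
              ⟨e, Finset.mem_filter.2 ⟨hNT heN, hew⟩⟩
            exact ⟨t, (Finset.mem_filter.1 htmem).1, (Finset.mem_filter.1 htmem).2,
              fun f hf hfw => htmax f (Finset.mem_filter.2 ⟨hf, hfw⟩)⟩
          rcases v₀ with u₀ | w₀
          · -- U-side cycle
            have hEne : Nonempty E := by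
              obtain ⟨e, _, _⟩ := hNcov (Sum.inl u₀) hv₀
              exact ⟨e⟩
            have h1 : ∀ u, ∃ t, Sum.inl u ∈ P → (t ∈ T ∧ eu t = u ∧
                ∀ f ∈ T, eu f = u → keyU pU f ≤ keyU pU t) := by
              intro u
              by_cases hu : Sum.inl u ∈ P
              · obtain ⟨t, h⟩ := htops u hu
                exact ⟨t, fun _ => h⟩
              · exact ⟨Classical.arbitrary E, fun h => absurd h hu⟩
            choose tp htp using h1
            have h2 : ∀ u, ∃ g, Sum.inl u ∈ P → (g ∈ N ∧ eu g = u) := by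
              intro u
              by_cases hu : Sum.inl u ∈ P
              · obtain ⟨g, hgN, hgu⟩ := hNcov (Sum.inl u) hu
                exact ⟨g, fun _ => ⟨hgN, hgu⟩⟩
              · exact ⟨Classical.arbitrary E, fun h => absurd h hu⟩
            choose Ne' hNe' using h2
            have h3 : ∀ u, ∃ g, Sum.inl u ∈ P → (g ∈ N ∧ ew g = ew (tp u)) := by
              intro u
              by_cases hu : Sum.inl u ∈ P
              · obtain ⟨htT, htu, htop⟩ := htp u hu
                by_cases hg : ∃ g ∈ N, ew g = ew (tp u)
                · obtain ⟨g, hgN, hgw⟩ := hg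
                  exact ⟨g, fun _ => ⟨hgN, hgw⟩⟩
                · push_neg at hg
                  exact absurd ⟨u, tp u, hu, htT, htu, htop, hg⟩ hc3
              · exact ⟨Classical.arbitrary E, fun h => absurd h hu⟩
            choose Nw hNw using h3
            have hF : ∀ u, Sum.inl u ∈ P → Sum.inl (eu (Nw u)) ∈ P := by
              intro u hu
              by_contra hcon
              obtain ⟨htT, htu, htop⟩ := htp u hu
              exact hc4 ⟨u, tp u, Nw u, hu, htT, htu, htop, (hNw u hu).1, (hNw u hu).2, hcon⟩
            obtain ⟨ua, N', huaP, hN'T, hN'm, hN'cov, htN'⟩ :=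
              constrCycle eu ew T P N hNT hNm hNcov hnc1 u₀ hv₀ tp
                (fun u hu => (htp u hu).1) (fun u hu => (htp u hu).2.1)
                Ne' (fun u hu => (hNe' u hu).1) (fun u hu => (hNe' u hu).2)
                Nw (fun u hu => (hNw u hu).1) (fun u hu => (hNw u hu).2) hF
            exact commitU eu ew pU pW T P IH ua huaP (tp ua) (htp ua huaP).1
              (htp ua huaP).2.1 (htp ua huaP).2.2 N' hN'T hN'm hN'cov htN'
          · -- W-side cycle
            have hEne : Nonempty E := by
              obtain ⟨e, _, _⟩ := hNcov (Sum.inr w₀) hv₀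
              exact ⟨e⟩
            have h1 : ∀ w, ∃ t, Sum.inr w ∈ P → (t ∈ T ∧ ew t = w ∧
                ∀ f ∈ T, ew f = w → keyW pW f ≤ keyW pW t) := by
              intro w
              by_cases hw : Sum.inr w ∈ P
              · obtain ⟨t, h⟩ := htopsW w hw
                exact ⟨t, fun _ => h⟩
              · exact ⟨Classical.arbitrary E, fun h => absurd h hw⟩
            choose tp htp using h1
            have h2 : ∀ w, ∃ g, Sum.inr w ∈ P → (g ∈ N ∧ ew g = w) := by
              intro w
              by_cases hw : Sum.inr w ∈ P
              · obtain ⟨g, hgN, hgw⟩ := hNcov (Sum.inr w) hw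
                exact ⟨g, fun _ => ⟨hgN, hgw⟩⟩
              · exact ⟨Classical.arbitrary E, fun h => absurd h hw⟩
            choose Ne' hNe' using h2
            have h3 : ∀ w, ∃ g, Sum.inr w ∈ P → (g ∈ N ∧ eu g = eu (tp w)) := by
              intro w
              by_cases hw : Sum.inr w ∈ P
              · obtain ⟨htT, htw, htop⟩ := htp w hw
                by_cases hg : ∃ g ∈ N, eu g = eu (tp w)
                · obtain ⟨g, hgN, hgu⟩ := hg
                  exact ⟨g, fun _ => ⟨hgN, hgu⟩⟩
                · push_neg at hg
                  exact absurd ⟨w, tp w, hw, htT, htw, htop, hg⟩ hc3W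
              · exact ⟨Classical.arbitrary E, fun h => absurd h hw⟩
            choose Nw hNw using h3
            have hF : ∀ w, Sum.inr w ∈ P → Sum.inr (ew (Nw w)) ∈ P := by
              intro w hw
              by_contra hcon
              obtain ⟨htT, htw, htop⟩ := htp w hw
              exact hc4W ⟨w, tp w, Nw w, hw, htT, htw, htop, (hNw w hw).1, (hNw w hw).2, hcon⟩
            have hF' : ∀ w, Sum.inl w ∈ P.image Sum.swap →
                Sum.inl (ew (Nw w)) ∈ P.image Sum.swap := by
              intro w hw
              rw [swap_mem_inl]
              exact hF w ((swap_mem_inl P w).1 hw)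
            obtain ⟨wa, N', hwaP, hN'T, hN'm, hN'cov, htN'⟩ :=
              constrCycle ew eu T (P.image Sum.swap) N hNT (matching_flip ew eu hNm)
                ((covP_swap eu ew N P).2 hNcov) (hnc1_swap eu ew P N hnc1)
                w₀ ((swap_mem_inl P w₀).2 hv₀) tp
                (fun w hw => (htp w ((swap_mem_inl P w).1 hw)).1)
                (fun w hw => (htp w ((swap_mem_inl P w).1 hw)).2.1)
                Ne' (fun w hw => (hNe' w ((swap_mem_inl P w).1 hw)).1)
                (fun w hw => (hNe' w ((swap_mem_inl P w).1 hw)).2)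
                Nw (fun w hw => (hNw w ((swap_mem_inl P w).1 hw)).1)
                (fun w hw => (hNw w ((swap_mem_inl P w).1 hw)).2) hF'
            have hwaP' : Sum.inr wa ∈ P := (swap_mem_inl P wa).1 hwaP
            exact commitW eu ew pU pW T P IH wa hwaP' (tp wa) (htp wa hwaP').1
              (htp wa hwaP').2.1 (htp wa hwaP').2.2 N' hN'T
              (matching_flip eu ew hN'm) ((covP_swap eu ew N' P).1 hN'cov) htN'
    · -- P is empty : deletion / terminal
      have hPe : P = ∅ := Finset.not_nonempty_iff_eq_empty.1 hP
      subst hPe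
      by_cases hdel : ∃ ed fd, ed ∈ T ∧ fd ∈ T ∧ ed ≠ fd ∧ ew ed = ew fd ∧
          keyW pW fd < keyW pW ed ∧ (∀ g ∈ T, eu g = eu ed → keyU pU g ≤ keyU pU ed)
      · obtain ⟨ed, fd, hedT, hfdT, hne, hew, hkW, htop⟩ := hdel
        have hcard : (T.erase fd).card < T.card := Finset.card_erase_lt_of_mem hfdT
        obtain ⟨M, hMT, hMm, _, hMstab⟩ := IH (T.erase fd) ∅ hcard
          ⟨∅, Finset.empty_subset _, fun e he => absurd he (Finset.notMem_empty e),
            fun v hv => absurd hv (Finset.notMem_empty v)⟩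
        refine ⟨M, fun f hf => Finset.mem_of_mem_erase (hMT hf), hMm,
          fun v hv => absurd hv (Finset.notMem_empty v), ?_⟩
        intro e heT heM hb
        by_cases hefd : e = fd
        · subst hefd
          obtain ⟨hb1, hb2, _⟩ := hb
          by_cases hedM : ed ∈ M
          · exact absurd hkW (asymm (hb2 ed hedM hew))
          · have hedT' : ed ∈ T.erase e := Finset.mem_erase.2 ⟨hne, hedT⟩
            have hstab := hMstab ed hedT' hedM
            -- find the failing component of Block for ed
            have hc1' : ∀ f ∈ M, eu f = eu ed → keyU pU f < keyU pU ed := by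
              intro f hfM hfu
              have hle := htop f (Finset.mem_of_mem_erase (hMT hfM)) hfu
              have hfe : f ≠ ed := fun h => hedM (h ▸ hfM)
              exact lt_of_le_of_ne hle (fun h => hfe (keyU_inj pU h))
            have hc3' : ∀ v ∈ (∅ : Finset (U ⊕ W)), CovV eu ew M v →
                CovV eu ew (swapIn eu ew M ed) v :=
              fun v hv => absurd hv (Finset.notMem_empty v)
            have : ¬ ∀ f ∈ M, ew f = ew ed → keyW pW f < keyW pW ed := by
              intro hc2'
              exact hstab ⟨hc1', hc2', hc3'⟩
            push_neg at this
            obtain ⟨g, hgM, hgw, hgk⟩ := this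
            have h6 : keyW pW g < keyW pW e := hb2 g hgM (hgw.trans hew)
            exact absurd (lt_trans h6 hkW) (not_lt.2 hgk)
        · have heT' : e ∈ T.erase fd := Finset.mem_erase.2 ⟨hefd, heT⟩
          exact hMstab e heT' heM hb
      · -- terminal : tops form a stable matching
        push_neg at hdel
        refine ⟨T.filter (fun e => ∀ f ∈ T, eu f = eu e → keyU pU f ≤ keyU pU e), 
          Finset.filter_subset _ _, ?_, fun v hv => absurd hv (Finset.notMem_empty v), ?_⟩
        · intro x hx y hy hxy
          obtain ⟨hxT, hxtop⟩ := Finset.mem_filter.1 hx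
          obtain ⟨hyT, hytop⟩ := Finset.mem_filter.1 hy
          constructor
          · intro h
            have h1 := hxtop y hyT h.symm
            have h2 := hytop x hxT h
            exact hxy (keyU_inj pU (le_antisymm h2 h1))
          · intro h
            rcases keyW_lt_or pW hxy with hk | hk
            · obtain ⟨g, hgT, hgu, hgk⟩ := hdel y x hyT hxT (Ne.symm hxy) h.symm hk
              exact absurd hgk (not_lt.2 (hytop g hgT hgu))
            · obtain ⟨g, hgT, hgu, hgk⟩ := hdel x y hxT hyT hxy h hk
              exact absurd hgk (not_lt.2 (hxtop g hgT hgu))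
        · intro e heT heM hb
          obtain ⟨hb1, _, _⟩ := hb
          obtain ⟨t, htmem, htmax⟩ := Finset.exists_max_image
            (T.filter (fun f => eu f = eu e)) (keyU pU)
            ⟨e, Finset.mem_filter.2 ⟨heT, rfl⟩⟩
          obtain ⟨htT, htu⟩ := Finset.mem_filter.1 htmem
          have htM : t ∈ T.filter (fun e => ∀ f ∈ T, eu f = eu e → keyU pU f ≤ keyU pU e) := by
            refine Finset.mem_filter.2 ⟨htT, ?_⟩
            intro f hfT hfu
            exact htmax f (Finset.mem_filter.2 ⟨hfT, by rw [hfu, htu]⟩)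
          have := hb1 t htM htu
          exact absurd this (not_lt.2 (htmax e (Finset.mem_filter.2 ⟨heT, rfl⟩)))

end Master

end CGproof

namespace CGproof

variable {U W E : Type*} [Fintype U] [Fintype W] [Fintype E] [DecidableEq E]

section Glue

variable (eu : E → U) (ew : E → W) (pU pW : E → ℝ) (C : Finset (U ⊕ W)) (Ec : Finset E)
variable (γU δU γW δW : E → ℝ)

lemma valU_eq {M : Finset E} (hM : IsMatching eu ew M) {f : E} (hf : f ∈ M) :
    valU eu pU M (eu f) = pU f := by
  classical
  rw [valU]
  have : M.filter (fun g => eu g = eu f) = {f} := by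
    ext g
    simp only [Finset.mem_filter, Finset.mem_singleton]
    constructor
    · rintro ⟨hgM, hgu⟩
      exact eq_of_eu eu ew hM hgM hf hgu
    · rintro rfl
      exact ⟨hf, rfl⟩
  rw [this, Finset.sum_singleton]

lemma valW_eq {M : Finset E} (hM : IsMatching eu ew M) {f : E} (hf : f ∈ M) :
    valW ew pW M (ew f) = pW f := by
  classical
  rw [valW]
  have : M.filter (fun g => ew g = ew f) = {f} := by
    ext g
    simp only [Finset.mem_filter, Finset.mem_singleton]
    constructor
    · rintro ⟨hgM, hgw⟩
      exact eq_of_ew eu ew hM hgM hf hgw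
    · rintro rfl
      exact ⟨hf, rfl⟩
  rw [this, Finset.sum_singleton]

lemma exists_stable
    (hγU : ∀ e, 0 < γU e) (hγδU : ∀ e, γU e < δU e)
    (hγW : ∀ e, 0 < γW e) (hγδW : ∀ e, γW e < δW e) :
    ∃ M, IsMatching eu ew M ∧ IsCritical eu ew C Ec M ∧
      ∀ e, ¬ CGBlocks eu ew pU pW γU δU γW δW C Ec M e := by
  classical
  obtain ⟨y, M0, hfeas, hM0m, hM0max, hM0tight, hM0pos⟩ := exists_TP eu ew C Ec
  set T : Finset E := Finset.univ.filter
    (fun e => mu eu ew C Ec e = y (Sum.inl (eu e)) + y (Sum.inr (ew e))) with hT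
  set P : Finset (U ⊕ W) := Finset.univ.filter (fun v => 0 < y v) with hPdef
  have hM0T : M0 ⊆ T := fun f hf =>
    Finset.mem_filter.2 ⟨Finset.mem_univ _, hM0tight f hf⟩
  have hM0P : ∀ v ∈ P, CovV eu ew M0 v := fun v hv => hM0pos v (Finset.mem_filter.1 hv).2
  obtain ⟨M, hMT, hMm, hMcov, hMstab⟩ := starMaster eu ew pU pW T.card T P le_rfl
    ⟨M0, hM0T, hM0m, hM0P⟩
  have hMtight : ∀ f ∈ M, mu eu ew C Ec f = y (Sum.inl (eu f)) + y (Sum.inr (ew f)) :=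
    fun f hf => (Finset.mem_filter.1 (hMT hf)).2
  have hMposcov : ∀ v, 0 < y v → CovV eu ew M v := fun v hv =>
    hMcov v (Finset.mem_filter.2 ⟨Finset.mem_univ _, hv⟩)
  have huncov : ∀ v, ¬ CovV eu ew M v → y v = 0 := by
    intro v hv
    by_contra h
    exact hv (hMposcov v (Nat.pos_of_ne_zero h))
  have hMw : ∑ e ∈ M, mu eu ew C Ec e = ∑ v, y v := by
    calc ∑ e ∈ M, mu eu ew C Ec e
        = ∑ e ∈ M, (y (Sum.inl (eu e)) + y (Sum.inr (ew e))) :=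
          Finset.sum_congr rfl hMtight
      _ = ∑ v ∈ covS eu ew M, y v := pair_sum_eq eu ew y hMm
      _ = ∑ v, y v := by
          apply Finset.sum_subset (Finset.subset_univ _)
          intro v _ hv
          exact huncov v (fun h => hv ((mem_covS_iff eu ew M v).2 h))
  have hcrit : IsCritical eu ew C Ec M := by
    intro N hN
    rw [critCov_eq_sum eu ew C Ec hN, critCov_eq_sum eu ew C Ec hMm, hMw]
    exact weak_duality eu ew C Ec y hfeas hN
  refine ⟨M, hMm, hcrit, ?_⟩
  intro e hblock
  obtain ⟨heM, hscrit, himp⟩ := hblock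
  -- strict improvements at both endpoints
  have hvalU : 0 < pU e - valU eu pU M (eu e) := by
    rcases himp with ⟨h1, _⟩ | ⟨h1, _⟩
    · have := hγU e; linarith
    · have h2 := hγU e; have h3 := hγδU e; linarith
  have hvalW : 0 < pW e - valW ew pW M (ew e) := by
    rcases himp with ⟨_, h1⟩ | ⟨_, h1⟩
    · have h2 := hγW e; have h3 := hγδW e; linarith
    · have := hγW e; linarith
  have hc1 : ∀ f ∈ M, eu f = eu e → keyU pU f < keyU pU e := by
    intro f hf hfu
    apply keyU_lt_of_lt
    have := valU_eq eu ew pU hMm hf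
    rw [hfu] at this
    linarith
  have hc2 : ∀ f ∈ M, ew f = ew e → keyW pW f < keyW pW e := by
    intro f hf hfw
    apply keyW_lt_of_lt
    have := valW_eq eu ew pW hMm hf
    rw [hfw] at this
    linarith
  -- the swap weight inequality
  have hswapm : IsMatching eu ew (swapIn eu ew M e) := swap_matching eu ew hMm e
  have hle := hscrit M hMm
  rw [critCov_eq_sum eu ew C Ec hMm, critCov_eq_sum eu ew C Ec hswapm] at hle
  have hsum := swap_sum eu ew C Ec M e heM
  have hSle : ∑ f ∈ M.filter (fun f => ¬(eu f ≠ eu e ∧ ew f ≠ ew e)), mu eu ew C Ec f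
      ≤ mu eu ew C Ec e := by omega
  set S := M.filter (fun f => ¬(eu f ≠ eu e ∧ ew f ≠ ew e)) with hSdef
  have hmemS : ∀ f, f ∈ S ↔ f ∈ M ∧ (eu f = eu e ∨ ew f = ew e) := by
    intro f
    rw [hSdef]
    simp only [Finset.mem_filter, not_and, not_not, ne_eq]
    constructor
    · rintro ⟨h1, h2⟩
      by_cases h : eu f = eu e
      · exact ⟨h1, Or.inl h⟩
      · exact ⟨h1, Or.inr (h2 h)⟩
    · rintro ⟨h1, h2 | h2⟩
      · exact ⟨h1, fun h => absurd h2 h⟩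
      · exact ⟨h1, fun _ => h2⟩
  -- the protected-coverage safety of the swap
  have hkey : mu eu ew C Ec e = y (Sum.inl (eu e)) + y (Sum.inr (ew e)) ∧
      (∀ v ∈ P, CovV eu ew M v → CovV eu ew (swapIn eu ew M e) v) := by
    have hsurv : ∀ h ∈ M, (eu h ≠ eu e ∧ ew h ≠ ew e) → h ∈ swapIn eu ew M e := by
      intro h hh hcond
      exact Finset.mem_insert.2 (Or.inr (Finset.mem_filter.2 ⟨hh, hcond⟩))
    have hePos : e ∈ swapIn eu ew M e := Finset.mem_insert_self _ _
    by_cases hu : ∃ f ∈ M, eu f = eu e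
    · obtain ⟨f, hfM, hfu⟩ := hu
      by_cases hw : ∃ g ∈ M, ew g = ew e
      · obtain ⟨g, hgM, hgw⟩ := hw
        by_cases hfg : f = g
        · -- parallel
          subst hfg
          have hfS : f ∈ S := (hmemS f).2 ⟨hfM, Or.inl hfu⟩
          have hmuf : mu eu ew C Ec f ≤ mu eu ew C Ec e :=
            le_trans (Finset.single_le_sum (fun i _ => Nat.zero_le _) hfS) hSle
          have htf := hMtight f hfM
          rw [hfu, hgw] at htf
          have hfe := hfeas e
          constructor
          · omega
          · intro v hv hcov
            rcases v with u' | w'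
            · obtain ⟨h, hhM, hhu⟩ := hcov
              by_cases hcond : eu h ≠ eu e ∧ ew h ≠ ew e
              · exact ⟨h, hsurv h hhM hcond, hhu⟩
              · have hhS := (hmemS h).2 ⟨hhM, by
                  by_cases h1 : eu h = eu e
                  · exact Or.inl h1
                  · push_neg at hcond
                    exact Or.inr (hcond h1)⟩
                have hhf : h = f := by
                  rcases ((hmemS h).1 hhS).2 with h1 | h1
                  · exact eq_of_eu eu ew hMm hhM hfM (h1.trans hfu.symm)
                  · exact eq_of_ew eu ew hMm hhM hgM (h1.trans hgw.symm)
                subst hhf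
                exact ⟨e, hePos, by rw [← hhu, hfu]⟩
            · obtain ⟨h, hhM, hhw⟩ := hcov
              by_cases hcond : eu h ≠ eu e ∧ ew h ≠ ew e
              · exact ⟨h, hsurv h hhM hcond, hhw⟩
              · have hhS := (hmemS h).2 ⟨hhM, by
                  by_cases h1 : eu h = eu e
                  · exact Or.inl h1
                  · push_neg at hcond
                    exact Or.inr (hcond h1)⟩
                have hhf : h = f := by
                  rcases ((hmemS h).1 hhS).2 with h1 | h1
                  · exact eq_of_eu eu ew hMm hhM hfM (h1.trans hfu.symm)
                  · exact eq_of_ew eu ew hMm hhM hgM (h1.trans hgw.symm)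
                subst hhf
                exact ⟨e, hePos, by rw [← hhw, hgw]⟩
        · -- two distinct removed edges
          have hfS : f ∈ S := (hmemS f).2 ⟨hfM, Or.inl hfu⟩
          have hgS : g ∈ S := (hmemS g).2 ⟨hgM, Or.inr hgw⟩
          have hfgsum : mu eu ew C Ec f + mu eu ew C Ec g ≤ mu eu ew C Ec e := by
            have hsub : {f, g} ⊆ S := by
              intro x hx
              rcases Finset.mem_insert.1 hx with rfl | hx
              · exact hfS
              · rw [Finset.mem_singleton.1 hx]; exact hgS
            have h9 : mu eu ew C Ec f + mu eu ew C Ec g ≤ ∑ x ∈ S, mu eu ew C Ec x := by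
              rw [← Finset.sum_pair hfg]
              exact Finset.sum_le_sum_of_subset hsub
            omega
          have htf := hMtight f hfM
          have htg := hMtight g hgM
          rw [hfu] at htf
          rw [hgw] at htg
          have hfe := hfeas e
          have hwf0 : y (Sum.inr (ew f)) = 0 := by omega
          have hug0 : y (Sum.inl (eu g)) = 0 := by omega
          constructor
          · omega
          · intro v hv hcov
            have hvpos : 0 < y v := (Finset.mem_filter.1 hv).2
            rcases v with u' | w'
            · obtain ⟨h, hhM, hhu⟩ := hcov
              by_cases hcond : eu h ≠ eu e ∧ ew h ≠ ew e
              · exact ⟨h, hsurv h hhM hcond, hhu⟩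
              · have hhor : eu h = eu e ∨ ew h = ew e := by
                  by_cases h1 : eu h = eu e
                  · exact Or.inl h1
                  · push_neg at hcond
                    exact Or.inr (hcond h1)
                rcases hhor with h1 | h1
                · -- h = f ; u' = eu e
                  exact ⟨e, hePos, by rw [← hhu, h1]⟩
                · -- h = g ; u' = eu g with y = 0
                  have hhg : h = g := eq_of_ew eu ew hMm hhM hgM (h1.trans hgw.symm)
                  subst hhg
                  rw [hhu] at hug0
                  omega
            · obtain ⟨h, hhM, hhw⟩ := hcov
              by_cases hcond : eu h ≠ eu e ∧ ew h ≠ ew e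
              · exact ⟨h, hsurv h hhM hcond, hhw⟩
              · have hhor : eu h = eu e ∨ ew h = ew e := by
                  by_cases h1 : eu h = eu e
                  · exact Or.inl h1
                  · push_neg at hcond
                    exact Or.inr (hcond h1)
                rcases hhor with h1 | h1
                · have hhf : h = f := eq_of_eu eu ew hMm hhM hfM (h1.trans hfu.symm)
                  subst hhf
                  rw [hhw] at hwf0
                  omega
                · exact ⟨e, hePos, by rw [← hhw, h1]⟩
      · -- f at u only, w uncovered
        push_neg at hw
        have hB0 : y (Sum.inr (ew e)) = 0 := by
          apply huncov
          intro ⟨g, hgM, hgw⟩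
          exact hw g hgM hgw
        have hfS : f ∈ S := (hmemS f).2 ⟨hfM, Or.inl hfu⟩
        have hmuf : mu eu ew C Ec f ≤ mu eu ew C Ec e :=
          le_trans (Finset.single_le_sum (fun i _ => Nat.zero_le _) hfS) hSle
        have htf := hMtight f hfM
        rw [hfu] at htf
        have hfe := hfeas e
        have hwf0 : y (Sum.inr (ew f)) = 0 := by omega
        constructor
        · omega
        · intro v hv hcov
          have hvpos : 0 < y v := (Finset.mem_filter.1 hv).2
          rcases v with u' | w'
          · obtain ⟨h, hhM, hhu⟩ := hcov
            by_cases hcond : eu h ≠ eu e ∧ ew h ≠ ew e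
            · exact ⟨h, hsurv h hhM hcond, hhu⟩
            · have hhor : eu h = eu e ∨ ew h = ew e := by
                by_cases h1 : eu h = eu e
                · exact Or.inl h1
                · push_neg at hcond
                  exact Or.inr (hcond h1)
              rcases hhor with h1 | h1
              · exact ⟨e, hePos, by rw [← hhu, h1]⟩
              · exact absurd h1 (hw h hhM)
          · obtain ⟨h, hhM, hhw⟩ := hcov
            by_cases hcond : eu h ≠ eu e ∧ ew h ≠ ew e
            · exact ⟨h, hsurv h hhM hcond, hhw⟩
            · have hhor : eu h = eu e ∨ ew h = ew e := by
                by_cases h1 : eu h = eu e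
                · exact Or.inl h1
                · push_neg at hcond
                  exact Or.inr (hcond h1)
              rcases hhor with h1 | h1
              · have hhf : h = f := eq_of_eu eu ew hMm hhM hfM (h1.trans hfu.symm)
                subst hhf
                rw [hhw] at hwf0
                omega
              · exact absurd h1 (hw h hhM)
    · -- u uncovered
      push_neg at hu
      have hA0 : y (Sum.inl (eu e)) = 0 := by
        apply huncov
        intro ⟨f, hfM, hfu⟩
        exact hu f hfM hfu
      by_cases hw : ∃ g ∈ M, ew g = ew e
      · obtain ⟨g, hgM, hgw⟩ := hw
        have hgS : g ∈ S := (hmemS g).2 ⟨hgM, Or.inr hgw⟩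
        have hmug : mu eu ew C Ec g ≤ mu eu ew C Ec e :=
          le_trans (Finset.single_le_sum (fun i _ => Nat.zero_le _) hgS) hSle
        have htg := hMtight g hgM
        rw [hgw] at htg
        have hfe := hfeas e
        have hug0 : y (Sum.inl (eu g)) = 0 := by omega
        constructor
        · omega
        · intro v hv hcov
          have hvpos : 0 < y v := (Finset.mem_filter.1 hv).2
          rcases v with u' | w'
          · obtain ⟨h, hhM, hhu⟩ := hcov
            by_cases hcond : eu h ≠ eu e ∧ ew h ≠ ew e
            · exact ⟨h, hsurv h hhM hcond, hhu⟩
            · have hhor : eu h = eu e ∨ ew h = ew e := by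
                by_cases h1 : eu h = eu e
                · exact Or.inl h1
                · push_neg at hcond
                  exact Or.inr (hcond h1)
              rcases hhor with h1 | h1
              · exact absurd h1 (hu h hhM)
              · have hhg : h = g := eq_of_ew eu ew hMm hhM hgM (h1.trans hgw.symm)
                subst hhg
                rw [hhu] at hug0
                omega
          · obtain ⟨h, hhM, hhw⟩ := hcov
            by_cases hcond : eu h ≠ eu e ∧ ew h ≠ ew e
            · exact ⟨h, hsurv h hhM hcond, hhw⟩
            · have hhor : eu h = eu e ∨ ew h = ew e := by
                by_cases h1 : eu h = eu e
                · exact Or.inl h1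
                · push_neg at hcond
                  exact Or.inr (hcond h1)
              rcases hhor with h1 | h1
              · exact absurd h1 (hu h hhM)
              · exact ⟨e, hePos, by rw [← hhw, h1]⟩
      · push_neg at hw
        have hB0 : y (Sum.inr (ew e)) = 0 := by
          apply huncov
          intro ⟨g, hgM, hgw⟩
          exact hw g hgM hgw
        have hfe := hfeas e
        constructor
        · omega
        · intro v hv hcov
          rcases v with u' | w'
          · obtain ⟨h, hhM, hhu⟩ := hcov
            by_cases hcond : eu h ≠ eu e ∧ ew h ≠ ew e
            · exact ⟨h, hsurv h hhM hcond, hhu⟩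
            · have hhor : eu h = eu e ∨ ew h = ew e := by
                by_cases h1 : eu h = eu e
                · exact Or.inl h1
                · push_neg at hcond
                  exact Or.inr (hcond h1)
              rcases hhor with h1 | h1
              · exact absurd h1 (hu h hhM)
              · exact absurd h1 (hw h hhM)
          · obtain ⟨h, hhM, hhw⟩ := hcov
            by_cases hcond : eu h ≠ eu e ∧ ew h ≠ ew e
            · exact ⟨h, hsurv h hhM hcond, hhw⟩
            · have hhor : eu h = eu e ∨ ew h = ew e := by
                by_cases h1 : eu h = eu e
                · exact Or.inl h1
                · push_neg at hcond
                  exact Or.inr (hcond h1)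
              rcases hhor with h1 | h1
              · exact absurd h1 (hu h hhM)
              · exact absurd h1 (hw h hhM)
  obtain ⟨htight_e, hc3⟩ := hkey
  have heT : e ∈ T := Finset.mem_filter.2 ⟨Finset.mem_univ _, htight_e⟩
  exact hMstab e heT heM ⟨hc1, hc2, hc3⟩

end Glue

end CGproof


/-- For every finite bipartite multigraph with preference functions,
critical vertices `C`, critical edges `E_c` (each incident to a critical vertex) and
reals `0 < γ_e^v < δ_e^v`, there is a cγ-stable matching `M` (critical and with no
cγ-blocking edge) such that every cγ-stable matching `N` satisfies `2|N| ≤ 3|M|`. -/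
theorem exists_cgamma_stable_three_halves_critical_edges {U W E : Type*} [Fintype U]
    [Fintype W] [Fintype E] [DecidableEq E]
    (eu : E → U) (ew : E → W) (pU pW : E → ℝ)
    (hpU : ∀ e, 0 ≤ pU e) (hpW : ∀ e, 0 ≤ pW e)
    (C : Finset (U ⊕ W)) (Ec : Finset E)
    (hEc : ∀ e ∈ Ec, Sum.inl (eu e) ∈ C ∨ Sum.inr (ew e) ∈ C)
    (γU δU γW δW : E → ℝ)
    (hγU : ∀ e, 0 < γU e) (hγδU : ∀ e, γU e < δU e)
    (hγW : ∀ e, 0 < γW e) (hγδW : ∀ e, γW e < δW e) :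
    ∃ M : Finset E, IsMatching eu ew M ∧ IsCritical eu ew C Ec M ∧
      (∀ e, ¬ CGBlocks eu ew pU pW γU δU γW δW C Ec M e) ∧
      (∀ N : Finset E, IsMatching eu ew N → IsCritical eu ew C Ec N →
        (∀ e, ¬ CGBlocks eu ew pU pW γU δU γW δW C Ec N e) →
        2 * N.card ≤ 3 * M.card) := by
  classical
  obtain ⟨M1, hM1m, hM1c, hM1b⟩ :=
    CGproof.exists_stable eu ew pU pW C Ec γU δU γW δW hγU hγδU hγW hγδW
  -- choose a stable matching of maximum cardinality
  set 𝒮 : Finset (Finset E) := (Finset.univ : Finset (Finset E)).filter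
    (fun M => IsMatching eu ew M ∧ IsCritical eu ew C Ec M ∧
      ∀ e, ¬ CGBlocks eu ew pU pW γU δU γW δW C Ec M e) with h𝒮
  have hM1mem : M1 ∈ 𝒮 := Finset.mem_filter.2 ⟨Finset.mem_univ _, hM1m, hM1c, hM1b⟩
  obtain ⟨M, hMmem, hMmax⟩ := Finset.exists_max_image 𝒮 (fun M => M.card) ⟨M1, hM1mem⟩
  obtain ⟨_, hMm, hMc, hMb⟩ := Finset.mem_filter.1 hMmem
  refine ⟨M, hMm, hMc, hMb, ?_⟩
  intro N hNm hNc hNb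
  have hNmem : N ∈ 𝒮 := Finset.mem_filter.2 ⟨Finset.mem_univ _, hNm, hNc, hNb⟩
  have := hMmax N hNmem
  omega
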